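/- arXiv:1512.06817 — 8 statements merged into one kernel-verified Lean document; each statement's English description precedes it below -/
import Mathlib

section
/- Let A be a finite alphabet and let M be a set of finite words over A containing words of arbitrarily large length. Then there exists an infinite word V : ℕ → A such that every factor of V is a factor of some word belonging to M. -/
/-- The factor of the infinite word `W` of length `n` occurring at position `i`. -/
def factorAt {A : Type*} (W : ℕ → A) (i n : ℕ) : List A :=
  (List.range n).map (fun j => W (i + j))

/-- `u` is a factor of the infinite word `W`. -/
def IsFactor {A : Type*} (W : ℕ → A) (u : List A) : Prop :=
  ∃ i : ℕ, u = factorAt W i u.length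

private lemma ultra_finite {A : Type*} [Finite A] (U : Ultrafilter ℕ) (g : ℕ → A) :
    ∃ a : A, {n | g n = a} ∈ U := by
  obtain ⟨a, ha⟩ := (U.map g).eq_pure_of_finite
  refine ⟨a, ?_⟩
  have : {a} ∈ U.map g := by rw [ha]; exact Filter.mem_pure.2 rfl
  simpa [Ultrafilter.mem_map, Set.preimage] using this

/-- Compactness lemma: if a set `M` of finite words over a finite alphabet contains
words of arbitrarily large length, then there is an infinite word all of whose
factors are factors of words of `M`. -/
theorem stmt0 {A : Type*} [Fintype A] (M : Set (List A))
    (hM : ∀ n : ℕ, ∃ w ∈ M, n ≤ w.length) :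
    ∃ V : ℕ → A, ∀ u : List A, IsFactor V u → ∃ w ∈ M, u <:+: w := by
  -- A is nonempty
  obtain ⟨w1, _, hw1⟩ := hM 1
  have hA : Nonempty A := by
    cases w1 with
    | nil => simp at hw1
    | cons a _ => exact ⟨a⟩
  obtain ⟨d⟩ := hA
  -- choose words
  choose w hwM hwlen using hM
  set f : ℕ → ℕ → A := fun n i => (w n).getD i d with hf
  -- nonprincipal ultrafilter
  obtain ⟨U, hU⟩ := Filter.exists_ultrafilter_le (Filter.cofinite (α := ℕ))
  choose V hV using fun i => ultra_finite U (fun n => f n i)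
  refine ⟨V, ?_⟩
  rintro u ⟨i, hu⟩
  set k := u.length with hk
  -- the set of n where f n agrees with V on [i, i+k) and n ≥ i + k
  have hS : {n | ∀ j < k, f n (i + j) = V (i + j)} ∈ U := by
    have : {n | ∀ j < k, f n (i + j) = V (i + j)} = ⋂ j ∈ Finset.range k,
        {n | f n (i + j) = V (i + j)} := by
      ext n; simp
    rw [this]
    exact (Filter.biInter_finset_mem _).2 fun j _ => hV (i + j)
  have hT : {n | i + k ≤ n} ∈ U := hU (by
    simp only [Filter.mem_cofinite]
    apply Set.Finite.subset (Set.finite_Iio (i + k))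
    intro x hx
    simpa using hx)
  obtain ⟨n, hn1, hn2⟩ := U.nonempty_of_mem (Filter.inter_mem hS hT)
  have hlen : i + k ≤ (w n).length := le_trans (le_trans hn2 (hwlen n)) (le_refl _)
  refine ⟨w n, hwM n, ?_⟩
  -- u = take k (drop i (w n)), which is an infix
  have heq : u = ((w n).drop i).take k := by
    apply List.ext_getElem
    · simp only [hu, factorAt, List.length_map, List.length_range, List.length_take,
        List.length_drop]
      omega
    · intro m hm1 hm2
      have hmk : m < k := by
        simpa only [hu, factorAt, List.length_map, List.length_range] using hm1
      simp only [hu, factorAt, List.getElem_map, List.getElem_range, List.getElem_take,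
        List.getElem_drop]
      rw [← hn1 m hmk]
      simp [hf, List.getD_eq_getElem?_getD,
        List.getElem?_eq_getElem (by omega : i + m < (w n).length)]
  rw [heq]
  exact ((List.take_prefix k _).isInfix).trans ((List.drop_suffix i (w n)).isInfix)
end

section
/- For an infinite word W : ℕ → A over a finite alphabet A, the following are equivalent: (a) W is uniformly recurrent, i.e., for every factor v of W there exists N such that v is a factor of every factor of W of length N; (b) for every infinite word V : ℕ → A, if every factor of V is a factor of W, then every factor of W is a factor of V. -/
/-- `W` is uniformly recurrent: every factor `v` occurs in every sufficiently long
factor of `W`. -/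
def UniformlyRecurrent {A : Type*} (W : ℕ → A) : Prop :=
  ∀ v : List A, IsFactor W v → ∃ N : ℕ,
    ∀ u : List A, IsFactor W u → u.length = N → v <:+: u

@[simp] lemma length_factorAt {A : Type*} (W : ℕ → A) (i n : ℕ) :
    (factorAt W i n).length = n := by simp [factorAt]

lemma factorAt_add {A : Type*} (W : ℕ → A) (i m n : ℕ) :
    factorAt W i (m + n) = factorAt W i m ++ factorAt W (i + m) n := by
  simp only [factorAt, List.range_add, List.map_append, List.map_map]
  congr 1
  apply List.map_congr_left
  intro j _
  simp [add_assoc]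

lemma isFactor_factorAt {A : Type*} (W : ℕ → A) (i n : ℕ) :
    IsFactor W (factorAt W i n) := ⟨i, by simp⟩

lemma isFactor_of_infix_factorAt {A : Type*} {W : ℕ → A} {u : List A} {i n : ℕ}
    (h : u <:+: factorAt W i n) : IsFactor W u := by
  obtain ⟨s, t, hst⟩ := h
  have hlen : s.length + (u.length + t.length) = n := by
    have := congrArg List.length hst
    simpa [add_assoc] using this
  refine ⟨i + s.length, ?_⟩
  have h2 : factorAt W i n =
      factorAt W i s.length ++ (factorAt W (i + s.length) u.length ++
        factorAt W (i + s.length + u.length) t.length) := by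
    rw [← factorAt_add, ← factorAt_add, hlen]
  rw [h2, ← List.append_assoc] at hst
  have h3 := List.append_inj hst (by simp)
  have h4 := List.append_inj h3.1 (by simp)
  exact h4.2

lemma IsFactor.of_infix {A : Type*} {W : ℕ → A} {u w : List A}
    (hw : IsFactor W w) (hu : u <:+: w) : IsFactor W u := by
  obtain ⟨i, hi⟩ := hw
  rw [hi] at hu
  exact isFactor_of_infix_factorAt hu

/-- An infinite word `W` over a finite alphabet is uniformly recurrent iff any
infinite word `V` whose factors are all factors of `W` has all factors of `W`
among its own factors. -/
theorem stmt1 {A : Type*} [Fintype A] (W : ℕ → A) :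
    UniformlyRecurrent W ↔
      ∀ V : ℕ → A, (∀ u : List A, IsFactor V u → IsFactor W u) →
        (∀ u : List A, IsFactor W u → IsFactor V u) := by
  constructor
  · intro hUR V hV u hu
    obtain ⟨N, hN⟩ := hUR u hu
    have h1 : IsFactor V (factorAt V 0 N) := isFactor_factorAt V 0 N
    have h2 := hN _ (hV _ h1) (by simp)
    exact h1.of_infix h2
  · intro h v hv
    by_contra hc
    push_neg at hc
    -- hc : ∀ N, ∃ u, IsFactor W u ∧ u.length = N ∧ ¬ v <:+: u
    classical
    set S : List A → Prop := fun x => IsFactor W x ∧ ¬ v <:+: x with hSdef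
    have Sinfix : ∀ {x y : List A}, S y → x <:+: y → S x := by
      rintro x y ⟨hy1, hy2⟩ hxy
      exact ⟨hy1.of_infix hxy, fun hvx => hy2 (hvx.trans hxy)⟩
    set Good : List A → Prop :=
      (fun u => ∀ n : ℕ, ∃ w : List A, w.length = n ∧ S (u ++ w)) with hGdef
    have goodNil : Good [] := by
      intro n
      obtain ⟨u, hu1, hu2, hu3⟩ := hc n
      exact ⟨u, hu2, by simpa using And.intro hu1 hu3⟩
    have step : ∀ u : List A, Good u → ∃ a : A, Good (u ++ [a]) := by
      intro u hu
      by_contra hstep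
      push_neg at hstep
      have hex : ∀ a : A, ∃ n : ℕ, ∀ w : List A, w.length = n → ¬ S (u ++ [a] ++ w) := by
        intro a
        by_contra hco
        push_neg at hco
        exact hstep a hco
      choose f hf using hex
      set N := Finset.univ.sup f with hN
      obtain ⟨w, hwlen, hwS⟩ := hu (N + 1)
      match w, hwlen with
      | a :: w', hwlen =>
        have hw'len : w'.length = N := by simpa using hwlen
        have hfa : f a ≤ N := hN ▸ Finset.le_sup (Finset.mem_univ a)
        refine hf a (w'.take (f a)) (by simp [hw'len, hfa]) ?_
        refine Sinfix hwS ⟨[], w'.drop (f a), ?_⟩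
        simp
      | [], hwlen => simp at hwlen
    have goodNil' := goodNil
    let p : ℕ → {u : List A // Good u} := fun n =>
      Nat.rec ⟨[], goodNil⟩
        (fun _ ih => ⟨ih.1 ++ [Classical.choose (step ih.1 ih.2)],
          Classical.choose_spec (step ih.1 ih.2)⟩) n
    have pzero : (p 0).1 = [] := rfl
    have pstep : ∀ n : ℕ, ∃ a : A, (p (n + 1)).1 = (p n).1 ++ [a] := fun n => ⟨_, rfl⟩
    have plen : ∀ n : ℕ, (p n).1.length = n := by
      intro n
      induction n with
      | zero => rfl
      | succ n ih =>
        obtain ⟨a, ha⟩ := pstep n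
        simp [ha, ih]
    have pS : ∀ n : ℕ, S (p n).1 := by
      intro n
      obtain ⟨w, hw, hsw⟩ := (p n).2 0
      rw [List.length_eq_zero_iff] at hw
      simpa [hw] using hsw
    set V : ℕ → A := fun n => ((p (n + 1)).1).getD n (W 0) with hVdef
    have key : ∀ n : ℕ, factorAt V 0 n = (p n).1 := by
      intro n
      induction n with
      | zero => simp [factorAt, pzero]
      | succ n ih =>
        obtain ⟨a, ha⟩ := pstep n
        have hVn : V n = a := by
          show ((p (n + 1)).1).getD n (W 0) = a
          rw [ha, List.getD_eq_getElem?_getD]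
          have hg : ((p n).1 ++ [a])[(p n).1.length]? = some a := List.getElem?_concat_length
          rw [plen] at hg
          rw [hg]
          rfl
        have heq : factorAt V 0 (n + 1) = factorAt V 0 n ++ factorAt V (0 + n) 1 :=
          factorAt_add V 0 n 1
        rw [heq, ih, ha]
        congr 1
        show List.map (fun j => V (0 + n + j)) (List.range 1) = [a]
        rw [List.range_succ, List.range_zero]
        simp [hVn]
    have SofV : ∀ u : List A, IsFactor V u → S u := by
      intro u ⟨i, hi⟩
      have hsplit : factorAt V 0 (i + u.length) =
          factorAt V 0 i ++ factorAt V i u.length := by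
        have := factorAt_add V 0 i u.length
        simpa using this
      refine Sinfix (pS (i + u.length)) ?_
      rw [← key, hsplit, hi]
      exact ⟨factorAt V 0 i, [], by simp⟩
    have hVW : ∀ u : List A, IsFactor V u → IsFactor W u := fun u hu => (SofV u hu).1
    have hvV : IsFactor V v := h V hVW v hv
    exact (SofV v hvV).2 (List.infix_refl v)
end

section
/- For every infinite word W : ℕ → A over a finite alphabet A there exists a uniformly recurrent infinite word Ŵ : ℕ → A such that every factor of Ŵ is a factor of W. -/
namespace URProof

variable {A : Type*}

@[simp] theorem length_factorAt (W : ℕ → A) (i n : ℕ) : (factorAt W i n).length = n := by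
  simp [factorAt]

theorem factorAt_add (W : ℕ → A) (i m n : ℕ) :
    factorAt W i (m + n) = factorAt W i m ++ factorAt W (i + m) n := by
  simp only [factorAt, List.range_add, List.map_append, List.map_map]
  congr 1
  simp [Function.comp, Nat.add_assoc]

theorem factorAt_one (W : ℕ → A) (i : ℕ) : factorAt W i 1 = [W i] := by
  simp [factorAt, List.range_succ]

/-- A "good" language: nonempty, factorial, right-extendable. -/
def Good (L : Set (List A)) : Prop :=
  ([] : List A) ∈ L ∧ (∀ u v : List A, u <:+: v → v ∈ L → u ∈ L) ∧
    ∀ u ∈ L, ∃ a : A, u ++ [a] ∈ L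

theorem isFactor_of_infix {W : ℕ → A} {u v : List A} (h : v <:+: u) (hu : IsFactor W u) :
    IsFactor W v := by
  obtain ⟨i, hi⟩ := hu
  obtain ⟨s, t, hst⟩ := h
  have hlen : u.length = s.length + (v.length + t.length) := by
    rw [← hst]; simp [Nat.add_assoc]
  rw [hlen] at hi
  rw [factorAt_add, factorAt_add] at hi
  have h1 : s ++ (v ++ t) = factorAt W i s.length ++
      (factorAt W (i + s.length) v.length ++ factorAt W (i + s.length + v.length) t.length) := by
    rw [← hi, ← hst]; simp
  have h2 := (List.append_inj h1 (by simp)).2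
  have h3 := (List.append_inj h2 (by simp)).1
  exact ⟨i + s.length, h3⟩

theorem good_factorLang (W : ℕ → A) : Good {u : List A | IsFactor W u} := by
  refine ⟨⟨0, rfl⟩, fun u v huv hv => isFactor_of_infix huv hv, ?_⟩
  rintro u ⟨i, hi⟩
  refine ⟨W (i + u.length), ⟨i, ?_⟩⟩
  have : (u ++ [W (i + u.length)]).length = u.length + 1 := by simp
  rw [this, factorAt_add, factorAt_one, ← hi]

/-- From a good language, produce a sequence of words `g n ∈ L` of length `n`,
each a prefix of the next. -/
noncomputable def wordSeq (L : Set (List A)) (h0 : ([] : List A) ∈ L)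
    (hext : ∀ u ∈ L, ∃ a : A, u ++ [a] ∈ L) : (n : ℕ) → {u : List A // u ∈ L ∧ u.length = n}
  | 0 => ⟨[], h0, rfl⟩
  | n + 1 =>
    let p := wordSeq L h0 hext n
    ⟨p.1 ++ [(hext p.1 p.2.1).choose], (hext p.1 p.2.1).choose_spec, by simp [p.2.2]⟩

theorem exists_word (L : Set (List A)) (h0 : ([] : List A) ∈ L)
    (hext : ∀ u ∈ L, ∃ a : A, u ++ [a] ∈ L) :
    ∃ f : ℕ → A, ∀ n : ℕ, factorAt f 0 n ∈ L := by
  set g := wordSeq L h0 hext with hg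
  have hlen : ∀ n, (g n).1.length = n := fun n => (g n).2.2
  have hf : ∀ n : ℕ, n < (g (n + 1)).1.length := fun n => by rw [hlen]; omega
  set f : ℕ → A := fun n => (g (n + 1)).1[n]'(hf n) with hfdef
  have key : ∀ n, factorAt f 0 n = (g n).1 := by
    intro n
    induction n with
    | zero => simp [factorAt]; rfl
    | succ n ih =>
      have hstep : (g (n + 1)).1 = (g n).1 ++ [(hext (g n).1 (g n).2.1).choose] := rfl
      have hfn : f n = (hext (g n).1 (g n).2.1).choose := by
        show (g (n + 1)).1[n]'(hf n) = _
        rw [List.getElem_of_eq hstep (hf n)]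
        exact List.getElem_concat_length (hlen n).symm _
      rw [factorAt_add, factorAt_one, hstep, ih]
      simp only [Nat.zero_add]
      rw [hfn]
  exact ⟨f, fun n => key n ▸ (g n).2.1⟩

theorem isFactor_infix_initial {f : ℕ → A} {u : List A} (h : IsFactor f u) :
    ∃ n : ℕ, u <:+: factorAt f 0 n := by
  obtain ⟨i, hi⟩ := h
  refine ⟨i + u.length, ?_⟩
  rw [factorAt_add, Nat.zero_add, ← hi]
  exact (List.suffix_append _ _).isInfix

end URProof

open URProof in
/-- For every infinite word `W` over a finite alphabet there is a uniformly
recurrent infinite word all of whose factors are factors of `W`. -/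
theorem stmt2 {A : Type*} [Fintype A] (W : ℕ → A) :
    ∃ What : ℕ → A, UniformlyRecurrent What ∧
      ∀ u : List A, IsFactor What u → IsFactor W u := by
  classical
  set L0 : Set (List A) := {u | IsFactor W u} with hL0
  set S : Set (Set (List A)) := {L | Good L ∧ L ⊆ L0} with hS
  -- Zorn's lemma: a minimal good sublanguage of L0.
  have hchaincond : ∀ c ⊆ S, IsChain (· ⊆ ·) c → c.Nonempty →
      ∃ lb ∈ S, ∀ s ∈ c, lb ⊆ s := by
    intro c hcS hchain hcne
    obtain ⟨L1, hL1c⟩ := hcne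
    refine ⟨⋂₀ c, ⟨⟨?_, ?_, ?_⟩, ?_⟩, fun s hs => Set.sInter_subset_of_mem hs⟩
    · exact fun L hL => (hcS hL).1.1
    · exact fun u v huv hv L hL => (hcS hL).1.2.1 u v huv (hv L hL)
    · -- extendability of the intersection: pigeonhole on a finite chain of sets of letters
      intro u hu
      set F : Set (Set A) := (fun L => {a : A | u ++ [a] ∈ L}) '' c with hF
      have hFne : F.Nonempty := ⟨_, ⟨L1, hL1c, rfl⟩⟩
      obtain ⟨E, hEF, hEmin⟩ : ∃ E ∈ F, ∀ E' ∈ F, id E' ≤ id E → id E = id E' := by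
        obtain ⟨E, hEF, hEmin⟩ := Set.Finite.exists_minimalFor id F (Set.toFinite F) hFne
        exact ⟨E, hEF, fun E' hE' h => le_antisymm (hEmin hE' h) h⟩
      obtain ⟨L2, hL2c, hL2E⟩ := hEF
      obtain ⟨a, ha⟩ := (hcS hL2c).1.2.2 u (hu L2 hL2c)
      have haE : a ∈ E := by rw [← hL2E]; exact ha
      refine ⟨a, fun L hLc => ?_⟩
      rcases eq_or_ne L L2 with rfl | hne
      · exact ha
      · rcases hchain hLc hL2c hne with h | h
        · have hsub : {a : A | u ++ [a] ∈ L} ⊆ E := by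
            rw [← hL2E]; intro b hb; exact h hb
          have := hEmin _ ⟨L, hLc, rfl⟩ hsub
          have : E = {a : A | u ++ [a] ∈ L} := this
          rw [this] at haE; exact haE
        · have : E ⊆ {a : A | u ++ [a] ∈ L} := by
            rw [← hL2E]; intro b hb; exact h hb
          exact this haE
    · exact (Set.sInter_subset_of_mem hL1c).trans (hcS hL1c).2
  obtain ⟨L, hLsub, hLmin⟩ : ∃ L, L ⊆ L0 ∧ Minimal (· ∈ S) L :=
    zorn_superset_nonempty S hchaincond L0 ⟨good_factorLang W, le_refl _⟩
  have hLS := hLmin.1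
  obtain ⟨hLgood, hLsub'⟩ := hLS
  obtain ⟨h0, hfac, hext⟩ := hLgood
  -- build the word
  obtain ⟨f, hf⟩ := exists_word L h0 hext
  have hfactors : ∀ u : List A, IsFactor f u → u ∈ L := by
    intro u hu
    obtain ⟨n, hn⟩ := isFactor_infix_initial hu
    exact hfac u _ hn (hf n)
  refine ⟨f, ?_, fun u hu => hLsub' (hfactors u hu)⟩
  -- uniform recurrence
  intro v hv
  by_contra hcon
  push_neg at hcon
  have hvL : v ∈ L := hfactors v hv
  -- the language of factors occurring in arbitrarily right-extendable v-avoiding words of L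
  set L' : Set (List A) := {u | ∀ N : ℕ, ∃ s t : List A,
    s ++ u ++ t ∈ L ∧ ¬ v <:+: (s ++ u ++ t) ∧ N ≤ t.length} with hL'
  have hwitness : ∀ N : ℕ, ∃ w : List A, w ∈ L ∧ w.length = N ∧ ¬ v <:+: w := by
    intro N
    obtain ⟨w, hw1, hw2, hw3⟩ := hcon N
    exact ⟨w, hfactors w hw1, hw2, hw3⟩
  have hL'sub : L' ⊆ L := by
    intro u hu
    obtain ⟨s, t, hmem, -, -⟩ := hu 0
    exact hfac u _ ⟨s, t, rfl⟩ hmem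
  have hL'good : Good L' := by
    refine ⟨?_, ?_, ?_⟩
    · intro N
      obtain ⟨w, hw1, hw2, hw3⟩ := hwitness N
      exact ⟨[], w, by simpa using hw1, by simpa using hw3, by omega⟩
    · rintro u' u ⟨p, q, rfl⟩ hu N
      obtain ⟨s, t, h1, h2, h3⟩ := hu N
      refine ⟨s ++ p, q ++ t, ?_, ?_, by simp; omega⟩
      · have : s ++ p ++ u' ++ (q ++ t) = s ++ (p ++ u' ++ q) ++ t := by
          simp [List.append_assoc]
        rw [this]; exact h1
      · have : s ++ p ++ u' ++ (q ++ t) = s ++ (p ++ u' ++ q) ++ t := by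
          simp [List.append_assoc]
        rw [this]; exact h2
    · intro u hu
      have hu' : ∀ N : ℕ, ∃ s t : List A,
          s ++ u ++ t ∈ L ∧ ¬ v <:+: (s ++ u ++ t) ∧ N + 1 ≤ t.length :=
        fun N => hu (N + 1)
      choose s t hmem havoid hlen using hu'
      have htne : ∀ N, t N ≠ [] := by
        intro N h
        have := hlen N
        rw [h] at this; simp at this
      set φ : ℕ → A := fun N => (t N).head (htne N) with hφ
      obtain ⟨a, hafib⟩ := Finite.exists_infinite_fiber φ
      have hinf : (φ ⁻¹' {a}).Infinite := Set.infinite_coe_iff.mp hafib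
      refine ⟨a, fun N => ?_⟩
      obtain ⟨M, hMfib, hMgt⟩ := hinf.exists_gt N
      have hta : t M = a :: (t M).tail := by
        conv_lhs => rw [← List.cons_head_tail (htne M)]
        rw [show (t M).head (htne M) = a from hMfib]
      have hrw : s M ++ (u ++ [a]) ++ (t M).tail = s M ++ u ++ t M := by
        rw [hta]; simp [List.append_assoc]
      refine ⟨s M, (t M).tail, ?_, ?_, ?_⟩
      · rw [hrw]; exact hmem M
      · rw [hrw]; exact havoid M
      · have h1 := hlen M
        have h2 : (t M).tail.length = (t M).length - 1 := by simp
        omega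
  have hL'S : L' ∈ S := ⟨hL'good, hL'sub.trans hLsub'⟩
  have hEq : L' = L := hLmin.eq_of_le hL'S hL'sub
  have hvL' : v ∈ L' := hEq ▸ hvL
  obtain ⟨s, t, -, havoid, -⟩ := hvL' 0
  exact havoid ⟨s, t, rfl⟩
end

section
/- Let W : ℕ → {a, b} be an infinite word over the two-letter alphabet {a, b} satisfying T_W(n) = n + 1 for all n ≥ 1 (a Sturmian word). Then exactly one of the two words aa and bb is a factor of W. -/
/-- The complexity function: the number of distinct factors of `W` of length `n`. -/
noncomputable def complexity {A : Type*} (W : ℕ → A) (n : ℕ) : ℕ :=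
  Set.ncard {u : List A | u.length = n ∧ IsFactor W u}

lemma Sfin {A : Type*} [Finite A] (W : ℕ → A) (n : ℕ) :
    {u : List A | u.length = n ∧ IsFactor W u}.Finite :=
  (List.finite_length_eq A n).subset fun _ hu => hu.1

/-- If W is constant from position N on, complexity is bounded by N+1. -/
lemma eventually_const {A : Type*} (W : ℕ → A) (N : ℕ) (c : A)
    (hc : ∀ m, N ≤ m → W m = c) (n : ℕ) : complexity W n ≤ N + 1 := by
  have hsub : {u : List A | u.length = n ∧ IsFactor W u}
      ⊆ (fun i => factorAt W i n) '' (Set.Iic N) := by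
    rintro u ⟨hlen, i, hi⟩
    rw [hlen] at hi
    rcases le_or_gt i N with hiN | hiN
    · exact ⟨i, hiN, hi.symm⟩
    · refine ⟨N, le_refl N, ?_⟩
      rw [hi]
      unfold factorAt
      apply List.map_congr_left
      intro j _
      rw [hc (N + j) (Nat.le_add_right _ _), hc (i + j) (le_trans hiN.le (Nat.le_add_right _ _))]
  calc complexity W n ≤ ((fun i => factorAt W i n) '' (Set.Iic N)).ncard :=
        Set.ncard_le_ncard hsub ((Set.finite_Iic N).image _)
    _ ≤ (Set.Iic N).ncard := Set.ncard_image_le (Set.finite_Iic N)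
    _ = N + 1 := by rw [← Finset.coe_Iic, Set.ncard_coe_finset, Nat.card_Iic]

lemma factor_two {W : ℕ → Bool} {u : List Bool} (hlen : u.length = 2)
    (hu : IsFactor W u) : ∃ i, u = [W i, W (i+1)] := by
  obtain ⟨i, hi⟩ := hu
  rw [hlen] at hi
  exact ⟨i, by simpa [factorAt, List.range_succ] using hi⟩

lemma mk_factor_two (W : ℕ → Bool) (i : ℕ) : IsFactor W [W i, W (i+1)] :=
  ⟨i, by simp [factorAt, List.range_succ]⟩

lemma const_from {W : ℕ → Bool} {c : Bool} {j : ℕ}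
    (hstep : ∀ m, W m = c → W (m+1) = c) (hj : W j = c) (h : ∀ n : ℕ, 1 ≤ n → complexity W n = n + 1) :
    False := by
  have hconst : ∀ m, j ≤ m → W m = c := by
    intro m hm
    induction m, hm using Nat.le_induction with
    | base => exact hj
    | succ n hn ih => exact hstep n ih
  have h1 := eventually_const W j c hconst (j+1)
  have h2 := h (j+1) (by omega)
  omega

/-- A Sturmian word over the two-letter alphabet `Bool` (`true = a`, `false = b`)
contains exactly one of the two words `aa`, `bb` as a factor. -/
theorem stmt6 (W : ℕ → Bool) (h : ∀ n : ℕ, 1 ≤ n → complexity W n = n + 1) :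
    Xor' (IsFactor W [true, true]) (IsFactor W [false, false]) := by
  have h2 : complexity W 2 = 3 := h 2 (by norm_num)
  by_cases htt : IsFactor W [true, true] <;> by_cases hff : IsFactor W [false, false]
  · -- both: contradiction
    exfalso
    obtain ⟨i, hi⟩ := factor_two (u := [true, true]) rfl htt
    obtain ⟨j, hj⟩ := factor_two (u := [false, false]) rfl hff
    have hit : W i = true ∧ W (i+1) = true := by
      constructor <;> simp_all
    have hjf : W j = false ∧ W (j+1) = false := by
      constructor <;> simp_all
    -- [true,false] must be a factor, else W is eventually constant true
    have htf : IsFactor W [true, false] := by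
      by_contra htf
      refine const_from (c := true) (j := i) ?_ hit.1 h
      intro m hm
      rcases Bool.eq_false_or_eq_true (W (m+1)) with h' | h'
      · exact h'
      · exact absurd (by rw [← hm, ← h']; exact mk_factor_two W m) htf
    have hft : IsFactor W [false, true] := by
      by_contra hft
      refine const_from (c := false) (j := j) ?_ hjf.1 h
      intro m hm
      rcases Bool.eq_false_or_eq_true (W (m+1)) with h' | h'
      · exact absurd (by rw [← hm, ← h']; exact mk_factor_two W m) hft
      · exact h'
    -- now 4 distinct factors of length 2
    have hsub : (↑({[true,true],[false,false],[true,false],[false,true]} : Finset (List Bool)) : Set (List Bool))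
        ⊆ {u : List Bool | u.length = 2 ∧ IsFactor W u} := by
      intro u hu
      simp only [Finset.coe_insert, Finset.coe_singleton, Set.mem_insert_iff,
        Set.mem_singleton_iff] at hu
      rcases hu with rfl | rfl | rfl | rfl
      exacts [⟨rfl, htt⟩, ⟨rfl, hff⟩, ⟨rfl, htf⟩, ⟨rfl, hft⟩]
    have h4 : (4:ℕ) ≤ complexity W 2 := by
      have := Set.ncard_le_ncard hsub (Sfin W 2)
      rwa [Set.ncard_coe_finset, show ({[true,true],[false,false],[true,false],[false,true]} : Finset (List Bool)).card = 4 from by decide] at this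
    omega
  · left; exact ⟨htt, hff⟩
  · right; exact ⟨hff, htt⟩
  · -- neither: complexity 2 ≤ 2
    exfalso
    have hsub : {u : List Bool | u.length = 2 ∧ IsFactor W u}
        ⊆ {[true, false], [false, true]} := by
      rintro u ⟨hlen, hu⟩
      obtain ⟨i, hi⟩ := factor_two hlen hu
      have hf := mk_factor_two W i
      rw [← hi] at hf
      rcases Bool.eq_false_or_eq_true (W i) with h1 | h1 <;>
        rcases Bool.eq_false_or_eq_true (W (i+1)) with h2' | h2'
      · rw [hi, h1, h2'] at hu; exact absurd hu htt
      · simp [hi, h1, h2']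
      · simp [hi, h1, h2']
      · rw [hi, h1, h2'] at hu; exact absurd hu hff
    have hle : complexity W 2 ≤ ({[true, false], [false, true]} : Set (List Bool)).ncard :=
      Set.ncard_le_ncard hsub ((Set.finite_singleton _).insert _)
    have : ({[true, false], [false, true]} : Set (List Bool)).ncard ≤ 2 :=
      le_trans (Set.ncard_insert_le _ _) (by simp)
    omega
end

section
/- Let W be an infinite word over the two-letter alphabet {a, b} that is not balanced. Then there exists a finite (possibly empty) word u over {a, b} such that both aua and bub are factors of W. -/
/-- `W` is balanced: any two factors of equal length contain almost the same
number of occurrences of each letter. -/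
def BalancedWord {A : Type*} [DecidableEq A] (W : ℕ → A) : Prop :=
  ∀ u v : List A, IsFactor W u → IsFactor W v → u.length = v.length →
    ∀ a : A, |(u.count a : ℤ) - (v.count a : ℤ)| ≤ 1

namespace Stmt7Aux

variable (W : ℕ → Bool)

/-- Number of `true`s in the window `[i, i+n)`. -/
def S (i n : ℕ) : ℕ := (factorAt W i n).count true

lemma factorAt_length (i n : ℕ) : (factorAt W i n).length = n := by
  simp [factorAt]

lemma factorAt_succ_right (i n : ℕ) :
    factorAt W i (n+1) = factorAt W i n ++ [W (i+n)] := by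
  simp [factorAt, List.range_succ]

lemma factorAt_succ_left (i n : ℕ) :
    factorAt W i (n+1) = W i :: factorAt W (i+1) n := by
  unfold factorAt
  rw [List.range_succ_eq_map]
  simp only [List.map_cons, List.map_map, Nat.add_zero]
  refine congrArg _ ?_
  refine List.map_congr_left (fun a _ => ?_)
  simp only [Function.comp_apply]
  congr 1
  omega

lemma S_succ_right (i n : ℕ) :
    S W i (n+1) = S W i n + (if W (i+n) then 1 else 0) := by
  rw [S, factorAt_succ_right, List.count_append]
  cases h : W (i+n) <;> simp [S, h]

lemma S_succ_left (i n : ℕ) :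
    S W i (n+1) = (if W i then 1 else 0) + S W (i+1) n := by
  rw [S, factorAt_succ_left, List.count_cons]
  cases h : W i <;> simp [S, h, Nat.add_comm]

lemma S_two (x k : ℕ) :
    S W x (k+2) = (if W x then 1 else 0) + S W (x+1) k + (if W (x+1+k) then 1 else 0) := by
  have h1 : S W x (k+2) = S W x (k+1) + (if W (x+(k+1)) then 1 else 0) :=
    S_succ_right W x (k+1)
  have h2 : S W x (k+1) = (if W x then 1 else 0) + S W (x+1) k := S_succ_left W x k
  have h3 : x + (k+1) = x+1+k := by omega
  rw [h1, h2, h3]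

lemma S_add (i a b : ℕ) : S W i (a+b) = S W i a + S W (i+a) b := by
  induction b with
  | zero => simp [S, factorAt]
  | succ b ih =>
    have h : a + (b+1) = (a+b) + 1 := by omega
    rw [h, S_succ_right, ih, S_succ_right]
    have h2 : i + (a+b) = i + a + b := by omega
    rw [h2]
    omega

lemma S_le (i n : ℕ) : S W i n ≤ n := by
  have := List.count_le_length (a := true) (l := factorAt W i n)
  rwa [factorAt_length] at this

lemma factorAt_congr {x y k : ℕ} (h : ∀ t < k, W (x+t) = W (y+t)) :
    factorAt W x k = factorAt W y k := by
  unfold factorAt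
  refine List.map_congr_left (fun a ha => ?_)
  exact h a (List.mem_range.mp ha)

lemma S_congr {x y k : ℕ} (h : ∀ t < k, W (x+t) = W (y+t)) :
    S W x k = S W y k := by
  rw [S, S, factorAt_congr W h]

lemma count_false (l : List Bool) : l.count false + l.count true = l.length := by
  induction l with
  | nil => simp
  | cons a l ih => cases a <;> simp [List.count_cons] <;> omega

end Stmt7Aux

open Stmt7Aux in
/-- If an infinite word over the two-letter alphabet `Bool` (`true = a`,
`false = b`) is not balanced, then for some finite word `u` both `aua` and `bub`
are factors of `W`. -/
theorem stmt7 (W : ℕ → Bool) (h : ¬ BalancedWord W) :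
    ∃ u : List Bool,
      IsFactor W (true :: u ++ [true]) ∧ IsFactor W (false :: u ++ [false]) := by
  classical
  -- Step 1: extract an unbalanced pair in terms of `S`.
  have hex : ∃ n, ∃ i j : ℕ, S W j n + 2 ≤ S W i n := by
    simp only [BalancedWord, not_forall] at h
    obtain ⟨u, v, hu, hv, hlen, a, ha⟩ := h
    obtain ⟨i, hi⟩ := hu
    obtain ⟨j, hj⟩ := hv
    push_neg at ha
    set n := u.length with hn
    have hvn : v.length = n := hlen.symm
    have hcu : u.count true = S W i n := by rw [hi]; rfl
    have hcv : v.count true = S W j n := by rw [hj, hvn]; rfl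
    have hfu : u.count false + u.count true = n := by rw [count_false]
    have hfv : v.count false + v.count true = n := by rw [count_false, hvn]
    refine ⟨n, ?_⟩
    rcases lt_abs.mp ha with h1 | h1
    · cases a
      · exact ⟨j, i, by omega⟩
      · exact ⟨i, j, by omega⟩
    · cases a
      · exact ⟨i, j, by omega⟩
      · exact ⟨j, i, by omega⟩
  -- Step 2: minimal counterexample length.
  obtain ⟨n, ⟨i, j, hij⟩, hminN⟩ :
      ∃ n, (∃ i j, S W j n + 2 ≤ S W i n) ∧
        ∀ m' < n, ∀ i' j', S W i' m' ≤ S W j' m' + 1 := by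
    refine ⟨Nat.find hex, Nat.find_spec hex, ?_⟩
    intro m' hm' i' j'
    by_contra hc
    exact Nat.find_min hex hm' ⟨i', j', by omega⟩
  obtain ⟨m, rfl⟩ : ∃ m, n = m + 2 := by
    refine ⟨n - 2, ?_⟩
    have h1 := S_le W i n
    omega
  have hmin : ∀ m' < m + 2, ∀ i' j', S W i' m' ≤ S W j' m' + 1 := hminN
  -- First letters.
  have hfirst : W i = true ∧ W j = false := by
    have h1 : S W i (m+2) = (if W i then 1 else 0) + S W (i+1) (m+1) :=
      S_succ_left W i (m+1)
    have h2 : S W j (m+2) = (if W j then 1 else 0) + S W (j+1) (m+1) :=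
      S_succ_left W j (m+1)
    have h3 := hmin (m+1) (by omega) (i+1) (j+1)
    cases hwi : W i <;> cases hwj : W j <;> rw [hwi] at h1 <;> rw [hwj] at h2 <;>
      simp only [if_true, if_false, Bool.false_eq_true, Bool.true_eq_false] at h1 h2 <;>
      first
      | exact ⟨rfl, rfl⟩
      | omega
  -- Last letters.
  have hlast : W (i+(m+1)) = true ∧ W (j+(m+1)) = false := by
    have h1 : S W i (m+2) = S W i (m+1) + (if W (i+(m+1)) then 1 else 0) :=
      S_succ_right W i (m+1)
    have h2 : S W j (m+2) = S W j (m+1) + (if W (j+(m+1)) then 1 else 0) :=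
      S_succ_right W j (m+1)
    have h3 := hmin (m+1) (by omega) i j
    cases hwi : W (i+(m+1)) <;> cases hwj : W (j+(m+1)) <;>
      rw [hwi] at h1 <;> rw [hwj] at h2 <;>
      simp only [if_true, if_false, Bool.false_eq_true, Bool.true_eq_false] at h1 h2 <;>
      first
      | exact ⟨rfl, rfl⟩
      | omega
  -- Middle letters agree.
  have hmid : ∀ k < m, W (i+1+k) = W (j+1+k) := by
    intro k
    induction k using Nat.strong_induction_on with
    | _ k IH =>
      intro hk
      have hpre : S W (i+1) k = S W (j+1) k :=
        S_congr W (fun t ht => IH t ht (by omega))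
      by_contra hne
      have h1 := S_two W i k
      have h2 := S_two W j k
      rw [hfirst.1] at h1
      rw [hfirst.2] at h2
      cases hwi : W (i+1+k)
      · -- `W (j+1+k) = true`; compare the suffixes of length `m-k`.
        have hwj : W (j+1+k) = true := by
          cases hwj : W (j+1+k)
          · exact absurd (hwi.trans hwj.symm) hne
          · rfl
        rw [hwi] at h1; rw [hwj] at h2
        simp only [if_true, if_false, Bool.false_eq_true, Bool.true_eq_false] at h1 h2
        have hsi := S_add W i (k+2) (m-k)
        have hsj := S_add W j (k+2) (m-k)
        have hkm : (k+2) + (m-k) = m + 2 := by omega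
        rw [hkm] at hsi hsj
        have h4 := hmin (m-k) (by omega) (i+(k+2)) (j+(k+2))
        omega
      · -- `W (j+1+k) = false`; compare the prefixes of length `k+2`.
        have hwj : W (j+1+k) = false := by
          cases hwj : W (j+1+k)
          · rfl
          · exact absurd (hwi.trans hwj.symm) hne
        rw [hwi] at h1; rw [hwj] at h2
        simp only [if_true, if_false, Bool.false_eq_true, Bool.true_eq_false] at h1 h2
        have h4 := hmin (k+2) (by omega) i j
        omega
  -- Assemble.
  refine ⟨factorAt W (i+1) m, ⟨i, ?_⟩, ⟨j, ?_⟩⟩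
  · have hlen : (true :: factorAt W (i+1) m ++ [true]).length = m + 2 := by
      simp [factorAt_length]
    rw [hlen]
    have h1 : factorAt W i (m+2) = W i :: (factorAt W (i+1) m ++ [W (i+1+m)]) := by
      rw [factorAt_succ_left W i (m+1), factorAt_succ_right W (i+1) m]
    rw [h1, hfirst.1]
    have h2 : i+1+m = i+(m+1) := by omega
    rw [h2, hlast.1]
    simp
  · have hlen : (false :: factorAt W (i+1) m ++ [false]).length = m + 2 := by
      simp [factorAt_length]
    rw [hlen]
    have h1 : factorAt W j (m+2) = W j :: (factorAt W (j+1) m ++ [W (j+1+m)]) := by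
      rw [factorAt_succ_left W j (m+1), factorAt_succ_right W (j+1) m]
    rw [h1, hfirst.2]
    have h2 : j+1+m = j+(m+1) := by omega
    rw [h2, hlast.2]
    have hmm : factorAt W (j+1) m = factorAt W (i+1) m :=
      factorAt_congr W (fun t ht => (hmid t ht).symm)
    rw [hmm]
    simp
end

section
/- Let W : ℕ → {a, b} be an infinite word with T_W(n) = n + 1 for all n ≥ 1 (a Sturmian word). Then the density of the letter a in W, defined as the limit ρ(a) = lim_{n→∞} |W(0)W(1)⋯W(n−1)|_a / n, exists and is an irrational number. -/
set_option maxHeartbeats 1000000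


namespace Stm

variable (W : ℕ → Bool)

lemma length_factorAt (i n : ℕ) : (factorAt W i n).length = n := by
  simp [factorAt]

lemma factorAt_getElem (i n t : ℕ) (ht : t < n) :
    (factorAt W i n)[t]'(by simp [factorAt, ht]) = W (i + t) := by
  simp [factorAt]

lemma factorAt_ext {i j n : ℕ} (hw : ∀ t, t < n → W (i + t) = W (j + t)) :
    factorAt W i n = factorAt W j n := by
  apply List.ext_getElem (by simp [factorAt])
  intro t h1 h2
  rw [factorAt_getElem W i n t (by simpa [factorAt] using h1),
    factorAt_getElem W j n t (by simpa [factorAt] using h1)]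
  exact hw t (by simpa [factorAt] using h1)

lemma factorAt_ext_iff {i j n : ℕ} :
    factorAt W i n = factorAt W j n ↔ ∀ t, t < n → W (i + t) = W (j + t) := by
  constructor
  · intro h t ht
    have := congrArg (fun l => l[t]?) h
    simpa [factorAt, List.getElem?_map, List.getElem?_range, ht] using this
  · exact factorAt_ext W

lemma factorAt_add (i m k : ℕ) :
    factorAt W i (m + k) = factorAt W i m ++ factorAt W (i + m) k := by
  simp only [factorAt, List.range_add, List.map_append, List.map_map]
  congr 1
  apply List.map_congr_left
  intro t _
  simp [Function.comp]; ring_nf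

lemma factorAt_succ_right (i n : ℕ) :
    factorAt W i (n + 1) = factorAt W i n ++ [W (i + n)] := by
  rw [factorAt_add]
  norm_num [factorAt, List.range_succ]

lemma factorAt_succ_left (i n : ℕ) :
    factorAt W i (n + 1) = W i :: factorAt W (i + 1) n := by
  have : n + 1 = 1 + n := by omega
  rw [this, factorAt_add]
  rfl

lemma factorAt_take (i n k : ℕ) (hk : k ≤ n) :
    (factorAt W i n).take k = factorAt W i k := by
  obtain ⟨d, rfl⟩ : ∃ d, n = k + d := ⟨n - k, by omega⟩
  rw [factorAt_add]
  have := List.take_left (l₁ := factorAt W i k) (l₂ := factorAt W (i + k) d)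
  rwa [length_factorAt] at this

lemma factorAt_drop (i n k : ℕ) (hk : k ≤ n) :
    (factorAt W i n).drop k = factorAt W (i + k) (n - k) := by
  obtain ⟨d, rfl⟩ : ∃ d, n = k + d := ⟨n - k, by omega⟩
  rw [factorAt_add, show k + d - k = d by omega]
  have := List.drop_left (l₁ := factorAt W i k) (l₂ := factorAt W (i + k) d)
  rwa [length_factorAt] at this

lemma isFactor_factorAt (i n : ℕ) : IsFactor W (factorAt W i n) :=
  ⟨i, by rw [length_factorAt]⟩

lemma isFactor_iff_exists {u : List Bool} :
    IsFactor W u ↔ ∃ i, u = factorAt W i u.length := Iff.rfl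

lemma isFactor_append_left {u v : List Bool} (h : IsFactor W (u ++ v)) : IsFactor W u := by
  obtain ⟨i, hi⟩ := h
  refine ⟨i, ?_⟩
  have h2 : u ++ v = factorAt W i (u.length + v.length) := by
    rw [← List.length_append]; exact hi
  calc u = (u ++ v).take u.length := by simp
  _ = (factorAt W i (u.length + v.length)).take u.length := by rw [h2]
  _ = factorAt W i u.length := factorAt_take _ _ _ _ (by omega)

lemma isFactor_append_right {u v : List Bool} (h : IsFactor W (u ++ v)) : IsFactor W v := by
  obtain ⟨i, hi⟩ := h
  refine ⟨i + u.length, ?_⟩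
  have h2 : u ++ v = factorAt W i (u.length + v.length) := by
    rw [← List.length_append]; exact hi
  calc v = (u ++ v).drop u.length := by simp
  _ = (factorAt W i (u.length + v.length)).drop u.length := by rw [h2]
  _ = factorAt W (i + u.length) (u.length + v.length - u.length) :=
      factorAt_drop _ _ _ _ (by omega)
  _ = factorAt W (i + u.length) v.length := by rw [show u.length + v.length - u.length = v.length by omega]

lemma finite_fset (n : ℕ) : {u : List Bool | u.length = n ∧ IsFactor W u}.Finite := by
  exact (List.finite_length_eq Bool n).subset (fun u hu => hu.1)

noncomputable def FS (n : ℕ) : Finset (List Bool) := (finite_fset W n).toFinset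

lemma mem_FS {u : List Bool} {n : ℕ} : u ∈ FS W n ↔ u.length = n ∧ IsFactor W u := by
  rw [FS, Set.Finite.mem_toFinset]
  rfl

lemma card_FS (n : ℕ) : (FS W n).card = complexity W n := by
  rw [complexity, FS]
  exact (Set.ncard_eq_toFinset_card _ (finite_fset W n)).symm

lemma factorAt_mem_FS (i n : ℕ) : factorAt W i n ∈ FS W n :=
  (mem_FS W).2 ⟨length_factorAt W i n, isFactor_factorAt W i n⟩

lemma mem_FS_iff_exists {u : List Bool} {n : ℕ} :
    u ∈ FS W n ↔ ∃ i, u = factorAt W i n := by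
  rw [mem_FS]
  constructor
  · rintro ⟨rfl, i, hi⟩
    exact ⟨i, hi⟩
  · rintro ⟨i, rfl⟩
    exact ⟨length_factorAt W i n, isFactor_factorAt W i n⟩

end Stm

namespace Stm

variable (W : ℕ → Bool)

/-- right special factor -/
def RS (u : List Bool) : Prop := IsFactor W (u ++ [false]) ∧ IsFactor W (u ++ [true])

/-- left special factor -/
def LS (u : List Bool) : Prop := IsFactor W (false :: u) ∧ IsFactor W (true :: u)

lemma RS_of_both {u : List Bool} {b : Bool} (h1 : IsFactor W (u ++ [b]))
    (h2 : IsFactor W (u ++ [!b])) : RS W u := by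
  cases b
  · exact ⟨h1, by simpa using h2⟩
  · exact ⟨by simpa using h2, h1⟩

lemma LS_of_both {u : List Bool} {b : Bool} (h1 : IsFactor W (b :: u))
    (h2 : IsFactor W ((!b) :: u)) : LS W u := by
  cases b
  · exact ⟨h1, by simpa using h2⟩
  · exact ⟨by simpa using h2, h1⟩

lemma RS.fac {u : List Bool} (h : RS W u) : IsFactor W u := isFactor_append_left W h.1

noncomputable def extb (u : List Bool) : Bool :=
  @ite _ (IsFactor W (u ++ [true])) (Classical.propDecidable _) true false

lemma append_singleton_inj {u v : List Bool} {b c : Bool} (h : u ++ [b] = v ++ [c]) :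
    u = v ∧ b = c := by
  have := List.append_inj' h (by simp)
  exact ⟨this.1, by simpa using this.2⟩

lemma extb_spec {u : List Bool} {n : ℕ} (hu : u ∈ FS W n) : u ++ [extb W u] ∈ FS W (n + 1) := by
  obtain ⟨i, rfl⟩ := (mem_FS_iff_exists W).1 hu
  by_cases hT : IsFactor W (factorAt W i n ++ [true])
  · rw [extb, if_pos hT]
    exact (mem_FS W).2 ⟨by simp [length_factorAt], hT⟩
  · rw [extb, if_neg hT]
    have hfac := factorAt_mem_FS W i (n + 1)
    rw [factorAt_succ_right] at hfac
    cases hWi : W (i + n)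
    · rwa [hWi] at hfac
    · exfalso; rw [hWi] at hfac; exact hT ((mem_FS W).1 hfac).2

lemma RS_ext_mem {v : List Bool} {n : ℕ} (hv : v.length = n) (hRS : RS W v) (b : Bool) :
    v ++ [b] ∈ FS W (n + 1) := by
  refine (mem_FS W).2 ⟨by simp [hv], ?_⟩
  cases b
  · exact hRS.1
  · exact hRS.2

lemma complexity_mono (n : ℕ) : complexity W n ≤ complexity W (n + 1) := by
  rw [← card_FS, ← card_FS]
  apply Finset.card_le_card_of_injOn (fun u => u ++ [extb W u])
  · intro u hu; exact extb_spec W hu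
  · intro u _ v _ hval
    exact (append_singleton_inj hval).1

lemma complexity_lt_of_RS {n : ℕ} {v : List Bool} (hv : v.length = n) (hRS : RS W v) :
    complexity W n + 1 ≤ complexity W (n + 1) := by
  classical
  rw [← card_FS, ← card_FS]
  have hvF : v ∈ FS W n := (mem_FS W).2 ⟨hv, hRS.fac W⟩
  set s : List Bool → List Bool := fun u => u ++ [extb W u] with hs
  have hinj : Set.InjOn s (FS W n) := fun u _ v _ hval => (append_singleton_inj hval).1
  have himg : (FS W n).image s ⊆ FS W (n + 1) := by
    intro x hx
    obtain ⟨u, hu, rfl⟩ := Finset.mem_image.1 hx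
    exact extb_spec W hu
  have heF : v ++ [!extb W v] ∈ FS W (n + 1) := RS_ext_mem W hv hRS _
  have hnot : v ++ [!extb W v] ∉ (FS W n).image s := by
    intro hmem
    obtain ⟨u, _, hval⟩ := Finset.mem_image.1 hmem
    obtain ⟨rfl, hb⟩ := append_singleton_inj hval
    simp at hb
  calc (FS W n).card + 1 = ((FS W n).image s).card + 1 := by
        rw [Finset.card_image_of_injOn hinj]
  _ = (insert (v ++ [!extb W v]) ((FS W n).image s)).card := by
        rw [Finset.card_insert_of_notMem hnot]
  _ ≤ (FS W (n + 1)).card := Finset.card_le_card (by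
        intro x hx
        rcases Finset.mem_insert.1 hx with rfl | hx
        · exact heF
        · exact himg hx)

lemma complexity_lt2_of_two_RS {n : ℕ} {v₁ v₂ : List Bool} (h1 : v₁.length = n) (hR1 : RS W v₁)
    (h2 : v₂.length = n) (hR2 : RS W v₂) (hne : v₁ ≠ v₂) :
    complexity W n + 2 ≤ complexity W (n + 1) := by
  classical
  rw [← card_FS, ← card_FS]
  set s : List Bool → List Bool := fun u => u ++ [extb W u] with hs
  have hinj : Set.InjOn s (FS W n) := fun u _ v _ hval => (append_singleton_inj hval).1
  set e₁ := v₁ ++ [!extb W v₁] with he1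
  set e₂ := v₂ ++ [!extb W v₂] with he2
  have hsub : insert e₁ (insert e₂ ((FS W n).image s)) ⊆ FS W (n + 1) := by
    intro x hx
    rcases Finset.mem_insert.1 hx with rfl | hx
    · exact RS_ext_mem W h1 hR1 _
    rcases Finset.mem_insert.1 hx with rfl | hx
    · exact RS_ext_mem W h2 hR2 _
    obtain ⟨u, hu, rfl⟩ := Finset.mem_image.1 hx
    exact extb_spec W hu
  have hnot2 : e₂ ∉ (FS W n).image s := by
    intro hmem
    obtain ⟨u, _, hval⟩ := Finset.mem_image.1 hmem
    obtain ⟨rfl, hb⟩ := append_singleton_inj hval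
    simp at hb
  have hnot1 : e₁ ∉ insert e₂ ((FS W n).image s) := by
    intro hmem
    rcases Finset.mem_insert.1 hmem with hval | hmem
    · exact hne (append_singleton_inj hval).1
    obtain ⟨u, _, hval⟩ := Finset.mem_image.1 hmem
    obtain ⟨rfl, hb⟩ := append_singleton_inj hval
    simp at hb
  calc (FS W n).card + 2 = (insert e₁ (insert e₂ ((FS W n).image s))).card := by
        rw [Finset.card_insert_of_notMem hnot1, Finset.card_insert_of_notMem hnot2,
          Finset.card_image_of_injOn hinj]
  _ ≤ (FS W (n + 1)).card := Finset.card_le_card hsub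

lemma complexity_le_of_no_RS {n : ℕ} (hno : ∀ v : List Bool, v.length = n → ¬ RS W v) :
    complexity W (n + 1) ≤ complexity W n := by
  rw [← card_FS, ← card_FS]
  apply Finset.card_le_card_of_injOn (fun u => u.take n)
  · intro u hu
    obtain ⟨i, rfl⟩ := (mem_FS_iff_exists W).1 hu
    dsimp only
    rw [factorAt_take W i (n + 1) n (by omega)]
    exact factorAt_mem_FS W i n
  · intro u₁ hu₁ u₂ hu₂ hval
    change u₁.take n = u₂.take n at hval
    have hl₁ : u₁.length = n + 1 := ((mem_FS W).1 hu₁).1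
    have hl₂ : u₂.length = n + 1 := ((mem_FS W).1 hu₂).1
    obtain ⟨b₁, hb₁⟩ : ∃ b, u₁.drop n = [b] := by
      apply List.length_eq_one_iff.1; rw [List.length_drop, hl₁]; omega
    obtain ⟨b₂, hb₂⟩ : ∃ b, u₂.drop n = [b] := by
      apply List.length_eq_one_iff.1; rw [List.length_drop, hl₂]; omega
    have he₁ : u₁ = u₁.take n ++ [b₁] := by rw [← hb₁, List.take_append_drop]
    have he₂ : u₂ = u₂.take n ++ [b₂] := by rw [← hb₂, List.take_append_drop]
    by_cases hbb : b₁ = b₂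
    · rw [he₁, he₂, hval, hbb]
    · exfalso
      have hRS : RS W (u₁.take n) := by
        apply RS_of_both W (b := b₁)
        · rw [← he₁]; exact ((mem_FS W).1 hu₁).2
        · have hnn : b₂ = !b₁ := Bool.eq_not_iff.2 (Ne.symm hbb)
          rw [← hnn, hval, ← he₂]; exact ((mem_FS W).1 hu₂).2
      exact hno _ (by rw [List.length_take, hl₁]; omega) hRS

lemma complexity_le_of_no_LS {n : ℕ} (hno : ∀ v : List Bool, v.length = n → ¬ LS W v) :
    complexity W (n + 1) ≤ complexity W n := by
  rw [← card_FS, ← card_FS]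
  apply Finset.card_le_card_of_injOn (fun u => u.drop 1)
  · intro u hu
    obtain ⟨i, rfl⟩ := (mem_FS_iff_exists W).1 hu
    dsimp only
    rw [factorAt_drop W i (n + 1) 1 (by omega)]
    simpa using factorAt_mem_FS W (i + 1) n
  · intro u₁ hu₁ u₂ hu₂ hval
    change u₁.drop 1 = u₂.drop 1 at hval
    have hl₁ : u₁.length = n + 1 := ((mem_FS W).1 hu₁).1
    have hl₂ : u₂.length = n + 1 := ((mem_FS W).1 hu₂).1
    obtain ⟨b₁, t₁, he₁⟩ := List.exists_cons_of_ne_nil (by intro hh; rw [hh] at hl₁; simp at hl₁ : u₁ ≠ [])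
    obtain ⟨b₂, t₂, he₂⟩ := List.exists_cons_of_ne_nil (by intro hh; rw [hh] at hl₂; simp at hl₂ : u₂ ≠ [])
    have ht₁ : u₁.drop 1 = t₁ := by rw [he₁]; rfl
    have ht₂ : u₂.drop 1 = t₂ := by rw [he₂]; rfl
    rw [ht₁, ht₂] at hval
    by_cases hbb : b₁ = b₂
    · rw [he₁, he₂, hval, hbb]
    · exfalso
      have hLS : LS W t₁ := by
        apply LS_of_both W (b := b₁)
        · rw [← he₁]; exact ((mem_FS W).1 hu₁).2
        · have hnn : b₂ = !b₁ := Bool.eq_not_iff.2 (Ne.symm hbb)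
          rw [← hnn, hval, ← he₂]; exact ((mem_FS W).1 hu₂).2
      apply hno t₁ _ hLS
      have := hl₁; rw [he₁] at this; simp at this; omega

lemma complexity_zero : complexity W 0 = 1 := by
  have : {u : List Bool | u.length = 0 ∧ IsFactor W u} = {[]} := by
    ext u
    simp only [Set.mem_setOf_eq, Set.mem_singleton_iff, List.length_eq_zero_iff]
    constructor
    · rintro ⟨rfl, -⟩; rfl
    · rintro rfl; exact ⟨rfl, ⟨0, rfl⟩⟩
  rw [complexity, this, Set.ncard_singleton]

end Stm

namespace Stm

variable (W : ℕ → Bool)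

theorem periodic_false (h : ∀ n, 1 ≤ n → complexity W n = n + 1) (i₀ p : ℕ) (hp : 0 < p)
    (hper : ∀ x, i₀ ≤ x → W (x + p) = W x) : False := by
  have hmod : ∀ x, i₀ ≤ x → W x = W (i₀ + (x - i₀) % p) := by
    intro x
    induction x using Nat.strong_induction_on with
    | _ x IH =>
      intro hx
      by_cases hcase : x < i₀ + p
      · rw [Nat.mod_eq_of_lt (by omega)]
        congr 1; omega
      · have h1 : i₀ ≤ x - p := by omega
        have h2 : W x = W (x - p) := by
          have := hper (x - p) h1
          rwa [show x - p + p = x by omega] at this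
        rw [h2, IH (x - p) (by omega) h1]
        congr 1
        rw [show x - i₀ = (x - p - i₀) + p by omega, Nat.add_mod_right]
  have hsub : FS W (i₀ + p) ⊆ (Finset.range (i₀ + p)).image (fun x => factorAt W x (i₀ + p)) := by
    intro u hu
    obtain ⟨x, rfl⟩ := (mem_FS_iff_exists W).1 hu
    rcases lt_or_ge x (i₀ + p) with hx | hx
    · exact Finset.mem_image.2 ⟨x, Finset.mem_range.2 hx, rfl⟩
    · refine Finset.mem_image.2 ⟨i₀ + (x - i₀) % p, Finset.mem_range.2 ?_, ?_⟩
      · have := Nat.mod_lt (x - i₀) hp; omega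
      · apply factorAt_ext
        intro t ht
        have e1 : W (x + t) = W (i₀ + (x + t - i₀) % p) := hmod _ (by omega)
        have e2 : W (i₀ + (x - i₀) % p + t) = W (i₀ + (i₀ + (x - i₀) % p + t - i₀) % p) :=
          hmod _ (by omega)
        rw [e1, e2]
        congr 2
        rw [show i₀ + (x - i₀) % p + t - i₀ = (x - i₀) % p + t by omega, Nat.mod_add_mod,
          show x + t - i₀ = (x - i₀) + t by omega]
  have hle : complexity W (i₀ + p) ≤ i₀ + p := by
    rw [← card_FS]
    calc (FS W (i₀ + p)).card ≤ _ := Finset.card_le_card hsub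
    _ ≤ (Finset.range (i₀ + p)).card := Finset.card_image_le
    _ = i₀ + p := by simp
  rw [h (i₀ + p) (by omega)] at hle
  omega

theorem exists_occ_ge (h : ∀ n, 1 ≤ n → complexity W n = n + 1) (n i₀ N : ℕ) :
    ∃ x, N ≤ x ∧ factorAt W x n = factorAt W i₀ n := by
  rcases Nat.eq_zero_or_pos n with rfl | hn
  · exact ⟨N, le_refl N, rfl⟩
  by_contra hno
  push_neg at hno
  set V : ℕ → Bool := fun t => W (N + t) with hV
  have hshift : ∀ x m, factorAt V x m = factorAt W (N + x) m := by
    intro x m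
    simp only [factorAt]
    apply List.map_congr_left
    intro t _
    simp only [hV]
    congr 1
    omega
  have htarget : factorAt W i₀ n ∉ FS V n := by
    intro hmem
    obtain ⟨x, hx⟩ := (mem_FS_iff_exists V).1 hmem
    rw [hshift] at hx
    exact hno (N + x) (by omega) hx.symm
  have hVn : complexity V n ≤ n := by
    rw [← card_FS]
    have hss : FS V n ⊆ (FS W n).erase (factorAt W i₀ n) := by
      intro u hu
      refine Finset.mem_erase.2 ⟨by rintro rfl; exact htarget hu, ?_⟩
      obtain ⟨x, rfl⟩ := (mem_FS_iff_exists V).1 hu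
      rw [hshift]
      exact factorAt_mem_FS W (N + x) n
    calc (FS V n).card ≤ ((FS W n).erase (factorAt W i₀ n)).card := Finset.card_le_card hss
    _ = (FS W n).card - 1 := Finset.card_erase_of_mem (factorAt_mem_FS W i₀ n)
    _ = n := by rw [card_FS, h n hn]; omega
  have hplateau : ∃ m, m < n ∧ complexity V (m + 1) ≤ complexity V m := by
    by_contra hc
    push_neg at hc
    have grow : ∀ m, m ≤ n → m + 1 ≤ complexity V m := by
      intro m
      induction m with
      | zero => intro _; rw [complexity_zero]
      | succ k IH =>
        intro hk
        have e1 := hc k (by omega)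
        have e2 := IH (by omega)
        omega
    have := grow n (le_refl n)
    omega
  obtain ⟨m, hmn, hple⟩ := hplateau
  have hnoRS : ∀ v : List Bool, v.length = m → ¬ RS V v := by
    intro v hv hRS
    have e1 := complexity_lt_of_RS V hv hRS
    omega
  have hdet : ∀ x y, factorAt V x m = factorAt V y m → V (x + m) = V (y + m) := by
    intro x y hxy
    by_contra hne
    apply hnoRS (factorAt V x m) (length_factorAt V x m)
    apply RS_of_both V (b := V (x + m))
    · rw [← factorAt_succ_right]
      exact isFactor_factorAt V x (m + 1)
    · have hn2 : V (y + m) = !V (x + m) := Bool.eq_not_iff.2 (Ne.symm hne)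
      rw [← hn2, hxy, ← factorAt_succ_right]
      exact isFactor_factorAt V y (m + 1)
  have key : ∀ a b, a < b → factorAt V a m = factorAt V b m → False := by
    intro a b hab heq
    have hag : ∀ t, V (a + t) = V (b + t) := by
      intro t
      induction t using Nat.strong_induction_on with
      | _ t IH =>
        rcases lt_or_ge t m with htm | htm
        · exact (factorAt_ext_iff V).1 heq t htm
        · have hw : factorAt V (a + (t - m)) m = factorAt V (b + (t - m)) m := by
            apply factorAt_ext
            intro s hs
            have e := IH (t - m + s) (by omega)
            rw [show a + (t - m) + s = a + (t - m + s) by omega,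
              show b + (t - m) + s = b + (t - m + s) by omega]
            exact e
          have e := hdet _ _ hw
          rwa [show a + (t - m) + m = a + t by omega, show b + (t - m) + m = b + t by omega] at e
    apply periodic_false W h (N + a) (b - a) (by omega)
    intro z hz
    have e := hag (z - (N + a))
    simp only [hV] at e
    rw [show N + (a + (z - (N + a))) = z by omega,
      show N + (b + (z - (N + a))) = z + (b - a) by omega] at e
    exact e.symm
  have hnotinj : ¬ Function.Injective (fun x => factorAt V x m) := by
    intro hinj
    apply Set.infinite_range_of_injective hinj
    apply Set.Finite.subset (FS V m).finite_toSet
    rintro u ⟨x, rfl⟩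
    exact factorAt_mem_FS V x m
  rw [Function.not_injective_iff] at hnotinj
  obtain ⟨x, y, heq, hxyne⟩ := hnotinj
  rcases (Ne.lt_or_gt hxyne) with hl | hl
  · exact key x y hl heq
  · exact key y x hl heq.symm

lemma exists_occ (h : ∀ n, 1 ≤ n → complexity W n = n + 1) {u : List Bool} {n : ℕ}
    (hu : u ∈ FS W n) (N : ℕ) : ∃ x, N ≤ x ∧ u = factorAt W x n := by
  obtain ⟨i₀, rfl⟩ := (mem_FS_iff_exists W).1 hu
  obtain ⟨x, hx, he⟩ := exists_occ_ge W h n i₀ N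
  exact ⟨x, hx, he.symm⟩

lemma RS_exists (h : ∀ n, 1 ≤ n → complexity W n = n + 1) (k : ℕ) :
    ∃ v : List Bool, v.length = k ∧ RS W v := by
  by_contra hno
  push_neg at hno
  have hle := complexity_le_of_no_RS W (fun v hv => hno v hv)
  rcases Nat.eq_zero_or_pos k with rfl | hk
  · rw [complexity_zero, h 1 (by omega)] at hle
    omega
  · rw [h k (by omega), h (k + 1) (by omega)] at hle
    omega

lemma RS_unique (h : ∀ n, 1 ≤ n → complexity W n = n + 1) {k : ℕ} {v₁ v₂ : List Bool}
    (h1 : v₁.length = k) (hR1 : RS W v₁) (h2 : v₂.length = k) (hR2 : RS W v₂) : v₁ = v₂ := by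
  by_contra hne
  have hle := complexity_lt2_of_two_RS W h1 hR1 h2 hR2 hne
  rcases Nat.eq_zero_or_pos k with rfl | hk
  · rw [complexity_zero, h 1 (by omega)] at hle
    omega
  · rw [h k (by omega), h (k + 1) (by omega)] at hle
    omega

lemma LS_exists (h : ∀ n, 1 ≤ n → complexity W n = n + 1) (k : ℕ) :
    ∃ v : List Bool, v.length = k ∧ LS W v := by
  by_contra hno
  push_neg at hno
  have hle := complexity_le_of_no_LS W (fun v hv => hno v hv)
  rcases Nat.eq_zero_or_pos k with rfl | hk
  · rw [complexity_zero, h 1 (by omega)] at hle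
    omega
  · rw [h k (by omega), h (k + 1) (by omega)] at hle
    omega

noncomputable def extlb (u : List Bool) : Bool :=
  @ite _ (IsFactor W (true :: u)) (Classical.propDecidable _) true false

lemma extlb_spec (h : ∀ n, 1 ≤ n → complexity W n = n + 1) {u : List Bool} {n : ℕ}
    (hu : u ∈ FS W n) : extlb W u :: u ∈ FS W (n + 1) := by
  have hlen : u.length = n := ((mem_FS W).1 hu).1
  by_cases hT : IsFactor W (true :: u)
  · rw [extlb, if_pos hT]
    exact (mem_FS W).2 ⟨by simp [hlen], hT⟩
  · rw [extlb, if_neg hT]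
    obtain ⟨x, hx, rfl⟩ := exists_occ W h hu 1
    have hfac : IsFactor W (W (x - 1) :: factorAt W x n) := by
      have e : factorAt W (x - 1) (n + 1) = W (x - 1) :: factorAt W (x - 1 + 1) n :=
        factorAt_succ_left W (x - 1) n
      rw [show x - 1 + 1 = x by omega] at e
      rw [← e]
      exact isFactor_factorAt W (x - 1) (n + 1)
    cases hWx : W (x - 1)
    · rw [hWx] at hfac
      exact (mem_FS W).2 ⟨by simp [hlen], hfac⟩
    · exfalso
      rw [hWx] at hfac
      exact hT hfac

lemma cons_singleton_inj {u v : List Bool} {b c : Bool} (hh : b :: u = c :: v) :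
    b = c ∧ u = v := by
  injection hh with h1 h2
  exact ⟨h1, h2⟩

lemma LS_ext_mem {v : List Bool} {n : ℕ} (hv : v.length = n) (hLS : LS W v) (b : Bool) :
    b :: v ∈ FS W (n + 1) := by
  refine (mem_FS W).2 ⟨by simp [hv], ?_⟩
  cases b
  · exact hLS.1
  · exact hLS.2

lemma LS_unique (h : ∀ n, 1 ≤ n → complexity W n = n + 1) {k : ℕ} {v₁ v₂ : List Bool}
    (h1 : v₁.length = k) (hL1 : LS W v₁) (h2 : v₂.length = k) (hL2 : LS W v₂) : v₁ = v₂ := by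
  classical
  by_contra hne
  have hle : complexity W k + 2 ≤ complexity W (k + 1) := by
    rw [← card_FS, ← card_FS]
    set s : List Bool → List Bool := fun u => extlb W u :: u with hs
    have hinj : Set.InjOn s (FS W k) := fun u _ v _ hval => (cons_singleton_inj hval).2
    set e₁ := (!extlb W v₁) :: v₁ with he1
    set e₂ := (!extlb W v₂) :: v₂ with he2
    have hsub : insert e₁ (insert e₂ ((FS W k).image s)) ⊆ FS W (k + 1) := by
      intro x hx
      rcases Finset.mem_insert.1 hx with rfl | hx
      · exact LS_ext_mem W h1 hL1 _
      rcases Finset.mem_insert.1 hx with rfl | hx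
      · exact LS_ext_mem W h2 hL2 _
      obtain ⟨u, hu, rfl⟩ := Finset.mem_image.1 hx
      exact extlb_spec W h hu
    have hnot2 : e₂ ∉ (FS W k).image s := by
      intro hmem
      obtain ⟨u, _, hval⟩ := Finset.mem_image.1 hmem
      obtain ⟨hb, rfl⟩ := cons_singleton_inj hval
      simp at hb
    have hnot1 : e₁ ∉ insert e₂ ((FS W k).image s) := by
      intro hmem
      rcases Finset.mem_insert.1 hmem with hval | hmem
      · exact hne (cons_singleton_inj hval).2
      obtain ⟨u, _, hval⟩ := Finset.mem_image.1 hmem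
      obtain ⟨hb, rfl⟩ := cons_singleton_inj hval
      simp at hb
    calc (FS W k).card + 2 = (insert e₁ (insert e₂ ((FS W k).image s))).card := by
          rw [Finset.card_insert_of_notMem hnot1, Finset.card_insert_of_notMem hnot2,
            Finset.card_image_of_injOn hinj]
    _ ≤ (FS W (k + 1)).card := Finset.card_le_card hsub
  rcases Nat.eq_zero_or_pos k with rfl | hk
  · rw [complexity_zero, h 1 (by omega)] at hle
    omega
  · rw [h k (by omega), h (k + 1) (by omega)] at hle
    omega

end Stm

namespace Stm

variable (W : ℕ → Bool)

/-- number of `true`s in the window of length `n` at position `i` -/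
def cnt (i n : ℕ) : ℕ := (factorAt W i n).count true

lemma cnt_zero (i : ℕ) : cnt W i 0 = 0 := rfl

lemma cnt_succ_right (i n : ℕ) : cnt W i (n + 1) = cnt W i n + (W (i + n)).toNat := by
  rw [cnt, cnt, factorAt_succ_right, List.count_append]
  cases W (i + n) <;> simp

lemma cnt_succ_left (i n : ℕ) : cnt W i (n + 1) = (W i).toNat + cnt W (i + 1) n := by
  rw [cnt, cnt, factorAt_succ_left]
  cases W i <;> simp [List.count_cons] <;> omega

lemma cnt_add (i m k : ℕ) : cnt W i (m + k) = cnt W i m + cnt W (i + m) k := by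
  rw [cnt, cnt, cnt, factorAt_add, List.count_append]

lemma cnt_le (i n : ℕ) : cnt W i n ≤ n := by
  rw [cnt]
  calc (factorAt W i n).count true ≤ (factorAt W i n).length := List.count_le_length
  _ = n := length_factorAt W i n

lemma cnt_congr {i j n : ℕ} (hw : ∀ t, t < n → W (i + t) = W (j + t)) :
    cnt W i n = cnt W j n := by
  rw [cnt, cnt, factorAt_ext W hw]

lemma factorAt_reverse_eq {i j n : ℕ} (hw : ∀ t, t < n → W (j + t) = W (i + (n - 1 - t))) :
    factorAt W j n = (factorAt W i n).reverse := by
  apply List.ext_getElem (by simp [length_factorAt])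
  intro t h1 h2
  rw [length_factorAt] at h1
  rw [factorAt_getElem W j n t h1, List.getElem_reverse]
  simp only [length_factorAt]
  rw [factorAt_getElem W i n _ (by omega)]
  exact hw t h1

lemma cnt_rev {i j n : ℕ} (hw : ∀ t, t < n → W (j + t) = W (i + (n - 1 - t))) :
    cnt W j n = cnt W i n := by
  rw [cnt, cnt, factorAt_reverse_eq W hw, List.count_reverse]

lemma cnt_two_split (x t : ℕ) :
    cnt W x (t + 2) = (W x).toNat + cnt W (x + 1) t + (W (x + 1 + t)).toNat := by
  have e1 : cnt W x (t + 2) = (W x).toNat + cnt W (x + 1) (t + 1) := cnt_succ_left W x (t + 1)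
  rw [e1, cnt_succ_right]
  omega

lemma toNat_le_one (b : Bool) : b.toNat ≤ 1 := by cases b <;> simp

lemma toNat_inj {a b : Bool} (hh : a.toNat = b.toNat) : a = b := by
  cases a <;> cases b <;> simp_all

theorem unbalanced_palindrome (hU : ∃ n i j, cnt W j n + 2 ≤ cnt W i n) :
    ∃ w : List Bool, w.reverse = w ∧ (∀ b : Bool, IsFactor W (b :: (w ++ [b]))) := by
  classical
  obtain ⟨nn, hnn⟩ : ∃ n, ∃ i j, cnt W j n + 2 ≤ cnt W i n := hU
  set P : ℕ → Prop := fun n => ∃ i j, cnt W j n + 2 ≤ cnt W i n with hP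
  have hPex : ∃ n, P n := ⟨nn, hnn⟩
  obtain ⟨i, j, hij⟩ := Nat.find_spec hPex
  set n := Nat.find hPex with hn
  have hbal : ∀ m, m < n → ∀ a b, cnt W a m ≤ cnt W b m + 1 := by
    intro m hm a b
    by_contra hc
    exact Nat.find_min hPex hm ⟨a, b, by omega⟩
  have hn2 : 2 ≤ n := by
    have c1 := cnt_le W i n
    omega
  set m := n - 2 with hmdef
  have hnm : n = m + 2 := by omega
  -- full splits of the two windows
  have spl_i : cnt W i n = (W i).toNat + cnt W (i + 1) m + (W (i + 1 + m)).toNat := by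
    rw [hnm]; exact cnt_two_split W i m
  have spl_j : cnt W j n = (W j).toNat + cnt W (j + 1) m + (W (j + 1 + m)).toNat := by
    rw [hnm]; exact cnt_two_split W j m
  -- first letters
  have hfirst : W i = true ∧ W j = false := by
    have e1 : cnt W i n = (W i).toNat + cnt W (i + 1) (m + 1) := by
      rw [hnm]; exact cnt_succ_left W i (m + 1)
    have e2 : cnt W j n = (W j).toNat + cnt W (j + 1) (m + 1) := by
      rw [hnm]; exact cnt_succ_left W j (m + 1)
    have e3 := hbal (m + 1) (by omega) (i + 1) (j + 1)
    have b1 := toNat_le_one (W i)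
    have b2 := toNat_le_one (W j)
    constructor
    · apply toNat_inj; simp only [Bool.toNat_true]; omega
    · apply toNat_inj; simp only [Bool.toNat_false]; omega
  -- last letters
  have hlast : W (i + 1 + m) = true ∧ W (j + 1 + m) = false := by
    have e1 : cnt W i n = cnt W i (m + 1) + (W (i + (m + 1))).toNat := by
      rw [hnm]; exact cnt_succ_right W i (m + 1)
    have e2 : cnt W j n = cnt W j (m + 1) + (W (j + (m + 1))).toNat := by
      rw [hnm]; exact cnt_succ_right W j (m + 1)
    have e3 := hbal (m + 1) (by omega) i j
    have b1 := toNat_le_one (W (i + (m + 1)))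
    have b2 := toNat_le_one (W (j + (m + 1)))
    rw [show i + 1 + m = i + (m + 1) by omega, show j + 1 + m = j + (m + 1) by omega]
    constructor
    · apply toNat_inj; simp only [Bool.toNat_true]; omega
    · apply toNat_inj; simp only [Bool.toNat_false]; omega
  -- middles are equal
  have hmid : ∀ t, t < m → W (i + 1 + t) = W (j + 1 + t) := by
    by_contra hc
    push_neg at hc
    obtain ⟨htm, hne⟩ := Nat.find_spec hc
    set t := Nat.find hc with ht
    have hpre : ∀ s, s < t → W (i + 1 + s) = W (j + 1 + s) := by
      intro s hs
      by_contra hcc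
      exact Nat.find_min hc hs ⟨by omega, hcc⟩
    have hC : cnt W (i + 1) t = cnt W (j + 1) t := cnt_congr W (fun s hs => hpre s hs)
    have ei : cnt W i (t + 2) = 1 + cnt W (i + 1) t + (W (i + 1 + t)).toNat := by
      rw [cnt_two_split, hfirst.1]; rfl
    have ej : cnt W j (t + 2) = 0 + cnt W (j + 1) t + (W (j + 1 + t)).toNat := by
      rw [cnt_two_split, hfirst.2]; rfl
    cases hwt : W (i + 1 + t)
    · -- case a = false, b = true : compare suffixes
      have hwt' : W (j + 1 + t) = true := by
        cases hjt : W (j + 1 + t)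
        · exfalso; apply hne; rw [hwt, hjt]
        · rfl
      have split_i : cnt W i n = cnt W i (t + 2) + cnt W (i + (t + 2)) (n - (t + 2)) := by
        have := cnt_add W i (t + 2) (n - (t + 2))
        rwa [show t + 2 + (n - (t + 2)) = n by omega] at this
      have split_j : cnt W j n = cnt W j (t + 2) + cnt W (j + (t + 2)) (n - (t + 2)) := by
        have := cnt_add W j (t + 2) (n - (t + 2))
        rwa [show t + 2 + (n - (t + 2)) = n by omega] at this
      have heq : cnt W i (t + 2) = cnt W j (t + 2) := by
        rw [ei, ej, hwt, hwt', hC]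
        simp only [Bool.toNat_true, Bool.toNat_false]
        omega
      have hfin := hbal (n - (t + 2)) (by omega) (i + (t + 2)) (j + (t + 2))
      omega
    · -- case a = true, b = false : compare prefixes
      have hwt' : W (j + 1 + t) = false := by
        cases hjt : W (j + 1 + t)
        · rfl
        · exfalso; apply hne; rw [hwt, hjt]
      have hfin := hbal (t + 2) (by omega) i j
      rw [ei, ej, hwt, hwt', hC] at hfin
      simp only [Bool.toNat_true, Bool.toNat_false] at hfin
      omega
  -- palindromicity
  have hpal : ∀ t, t < m → W (i + 1 + t) = W (i + 1 + (m - 1 - t)) := by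
    by_contra hc
    push_neg at hc
    obtain ⟨htm, hne⟩ := Nat.find_spec hc
    set t := Nat.find hc with ht
    have hpre : ∀ s, s < t → W (i + 1 + s) = W (i + 1 + (m - 1 - s)) := by
      intro s hs
      by_contra hcc
      exact Nat.find_min hc hs ⟨by omega, hcc⟩
    have htlt : t < m - 1 - t := by
      have hmm : W (i + 1 + (m - 1 - t)) ≠ W (i + 1 + (m - 1 - (m - 1 - t))) := by
        rw [show m - 1 - (m - 1 - t) = t by omega]
        exact fun e => hne e.symm
      have h1 : ¬ (m - 1 - t < t) := fun hlt => Nat.find_min hc hlt ⟨by omega, hmm⟩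
      have h2 : t ≠ m - 1 - t := fun e => hne (by rw [← e])
      omega
    set C := cnt W (i + 1) t with hCdef
    have hrev : cnt W (i + 1 + (m - t)) t = C := by
      apply cnt_rev
      intro s hs
      have e1 := hpre (t - 1 - s) (by omega)
      rw [show m - 1 - (t - 1 - s) = m - t + s by omega] at e1
      rw [show i + 1 + (m - t) + s = i + 1 + (m - t + s) by omega, ← e1]
    cases hwt : W (i + 1 + t)
    · -- w t = false, w (m-1-t) = true : u-suffix vs v-prefix
      have hwm : W (i + 1 + (m - 1 - t)) = true := by
        cases hx : W (i + 1 + (m - 1 - t))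
        · exfalso; apply hne; rw [hwt, hx]
        · rfl
      have eu : cnt W (i + (m - t)) (t + 2) = C + 2 := by
        rw [cnt_two_split]
        rw [show i + (m - t) = i + 1 + (m - 1 - t) by omega, hwm]
        rw [show i + 1 + (m - 1 - t) + 1 = i + 1 + (m - t) by omega, hrev]
        rw [show i + 1 + (m - t) + t = i + 1 + m by omega, hlast.1]
        simp only [Bool.toNat_true]; omega
      have ev : cnt W j (t + 2) = C := by
        rw [cnt_two_split, hfirst.2]
        have hjt : W (j + 1 + t) = false := by rw [← hmid t htm, hwt]
        rw [hjt]
        have : cnt W (j + 1) t = C := (cnt_congr W (fun s hs => (hmid s (by omega)).symm))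
        rw [this]
        simp only [Bool.toNat_false]; omega
      have hfin := hbal (t + 2) (by omega) (i + (m - t)) j
      omega
    · -- w t = true, w (m-1-t) = false : u-prefix vs v-suffix
      have hwm : W (i + 1 + (m - 1 - t)) = false := by
        cases hx : W (i + 1 + (m - 1 - t))
        · rfl
        · exfalso; apply hne; rw [hwt, hx]
      have eu : cnt W i (t + 2) = C + 2 := by
        rw [cnt_two_split, hfirst.1, hwt, ← hCdef]
        simp only [Bool.toNat_true]; omega
      have ev : cnt W (j + (m - t)) (t + 2) = C := by
        rw [cnt_two_split]
        have e0 : W (j + (m - t)) = false := by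
          rw [show j + (m - t) = j + 1 + (m - 1 - t) by omega, ← hmid _ (by omega), hwm]
        rw [e0]
        have e1 : cnt W (j + (m - t) + 1) t = C := by
          have := cnt_congr W (i := j + 1 + (m - t)) (j := i + 1 + (m - t)) (n := t)
            (fun s hs => by
              rw [show j + 1 + (m - t) + s = j + 1 + (m - t + s) by omega,
                show i + 1 + (m - t) + s = i + 1 + (m - t + s) by omega]
              exact (hmid (m - t + s) (by omega)).symm)
          rw [show j + (m - t) + 1 = j + 1 + (m - t) by omega, this, hrev]
        rw [e1]
        have e2 : W (j + (m - t) + 1 + t) = false := by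
          rw [show j + (m - t) + 1 + t = j + 1 + m by omega, hlast.2]
        rw [e2]
        simp only [Bool.toNat_false]; omega
      have hfin := hbal (t + 2) (by omega) i (j + (m - t))
      omega
  -- construct the palindrome
  refine ⟨factorAt W (i + 1) m, ?_, ?_⟩
  · have e := factorAt_reverse_eq W (i := i + 1) (j := i + 1) (n := m)
      (fun t ht => by
        have := hpal t ht
        rw [show (i + 1) + t = i + 1 + t from rfl]
        exact this)
    exact e.symm
  · intro b
    cases b
    · have e : (false : Bool) :: (factorAt W (i + 1) m ++ [false]) = factorAt W j n := by
        rw [hnm, show m + 2 = (m + 1) + 1 from rfl, factorAt_succ_left W j (m + 1),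
          factorAt_succ_right W (j + 1) m, hfirst.2, hlast.2]
        rw [factorAt_ext W (i := i + 1) (j := j + 1) (n := m) (fun t ht => hmid t ht)]
      rw [e]
      exact isFactor_factorAt W j n
    · have e : (true : Bool) :: (factorAt W (i + 1) m ++ [true]) = factorAt W i n := by
        rw [hnm, show m + 2 = (m + 1) + 1 from rfl, factorAt_succ_left W i (m + 1),
          factorAt_succ_right W (i + 1) m, hfirst.1, hlast.1]
      rw [e]
      exact isFactor_factorAt W i n

end Stm

namespace Stm

variable (W : ℕ → Bool)

lemma isFactor_take {u : List Bool} (hu : IsFactor W u) (k : ℕ) : IsFactor W (u.take k) := by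
  have e : u.take k ++ u.drop k = u := List.take_append_drop k u
  rw [← e] at hu
  exact isFactor_append_left W hu

lemma bool_eq_or_eq_not (b c : Bool) : b = c ∨ b = !c := by
  cases b <;> cases c <;> simp

lemma window_cons {x k : ℕ} {c : Bool} {w : List Bool}
    (hx : factorAt W x (k + 1) = c :: w) : W x = c ∧ factorAt W (x + 1) k = w := by
  rw [factorAt_succ_left] at hx
  injection hx with h1 h2
  exact ⟨h1, h2⟩

lemma window_snoc {x k : ℕ} {d : Bool} {w : List Bool}
    (hx : factorAt W x (k + 1) = w ++ [d]) : factorAt W x k = w ∧ W (x + k) = d := by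
  rw [factorAt_succ_right] at hx
  exact append_singleton_inj hx

lemma cons_eq_append_singleton : ∀ {w : List Bool} {c d : Bool}, c :: w = w ++ [d] →
    c = d ∧ w = List.replicate w.length c := by
  intro w
  induction w with
  | nil =>
    intro c d h
    simp at h
    exact ⟨h, rfl⟩
  | cons a t IH =>
    intro c d h
    rw [List.cons_append] at h
    injection h with h1 h2
    obtain ⟨h3, h4⟩ := IH h2
    refine ⟨h1.trans h3, ?_⟩
    rw [List.length_cons, List.replicate_succ, h1]
    exact congrArg (a :: ·) h4

lemma factorAt_getElem? (i n t : ℕ) (ht : t < n) :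
    (factorAt W i n)[t]? = some (W (i + t)) := by
  simp [factorAt, List.getElem?_map, List.getElem?_range, ht]

lemma pal_pointwise {x k : ℕ} (hp : (factorAt W x k).reverse = factorAt W x k) :
    ∀ s, s < k → W (x + s) = W (x + (k - 1 - s)) := by
  intro s hs
  have e := congrArg (fun l => l[s]?) hp
  rw [List.getElem?_reverse (by rw [length_factorAt]; omega)] at e
  rw [length_factorAt] at e
  rw [factorAt_getElem? W x k s hs, factorAt_getElem? W x k (k - 1 - s) (by omega)] at e
  exact (Option.some.inj e).symm

lemma factorAt_eq_replicate {x L : ℕ} {cc : Bool} :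
    factorAt W x L = List.replicate L cc ↔ ∀ s, s < L → W (x + s) = cc := by
  constructor
  · intro he s hs
    have e := congrArg (fun l => l[s]?) he
    rw [factorAt_getElem? W x L s hs] at e
    have e2 : (List.replicate L cc)[s]? = some cc := by
      simp [List.getElem?_replicate, hs]
    rw [e2] at e
    exact Option.some.inj e
  · intro hh
    apply List.ext_getElem (by simp [length_factorAt])
    intro s h1 h2
    rw [length_factorAt] at h1
    rw [factorAt_getElem W x L s h1, List.getElem_replicate]
    exact hh s h1

lemma replicate_snoc (L : ℕ) (cc : Bool) :
    List.replicate L cc ++ [cc] = List.replicate (L + 1) cc :=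
  (List.replicate_succ' (n := L) (a := cc)).symm

theorem balance (h : ∀ n, 1 ≤ n → complexity W n = n + 1) :
    ∀ n a b, cnt W a n ≤ cnt W b n + 1 := by
  classical
  by_contra hcon
  push_neg at hcon
  obtain ⟨n₀, a₀, b₀, hab⟩ := hcon
  obtain ⟨w, hwpal, hwb⟩ := unbalanced_palindrome W ⟨n₀, a₀, b₀, by omega⟩
  set n := w.length with hn
  have hwb' : ∀ b : Bool, IsFactor W ((b :: w) ++ [b]) := by
    intro b
    have e := hwb b
    rwa [← List.cons_append] at e
  have hfac_cw : ∀ b : Bool, IsFactor W (b :: w) := fun b => isFactor_append_left W (hwb' b)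
  have hfac_wc : ∀ b : Bool, IsFactor W (w ++ [b]) := by
    intro b
    have e := hwb b
    exact isFactor_append_right W (u := [b]) e
  have hwRS : RS W w := ⟨hfac_wc false, hfac_wc true⟩
  have hwLS : LS W w := ⟨hfac_cw false, hfac_cw true⟩
  obtain ⟨r, hrlen, hrRS⟩ := RS_exists W h (n + 1)
  have hrne : r ≠ [] := by intro e; rw [e] at hrlen; simp at hrlen
  obtain ⟨c, rt, hr⟩ := List.exists_cons_of_ne_nil hrne
  have hrtRS : RS W rt := by
    constructor
    · have e := hrRS.1
      rw [hr, List.cons_append] at e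
      exact isFactor_append_right W (u := [c]) e
    · have e := hrRS.2
      rw [hr, List.cons_append] at e
      exact isFactor_append_right W (u := [c]) e
  have hrtlen : rt.length = n := by
    have e := hrlen
    rw [hr] at e
    simp at e
    omega
  have hrt : rt = w := RS_unique W h hrtlen hrtRS hn.symm hwRS
  rw [hrt] at hr
  rw [hr] at hrRS hrlen
  by_cases hconst : ∃ cc : Bool, w = List.replicate n cc
  · -- CASE I : w constant
    obtain ⟨cc, hwc⟩ := hconst
    have hrepeq : cc :: (List.replicate n cc ++ [cc]) = List.replicate (n + 2) cc := by
      rw [replicate_snoc, ← List.replicate_succ]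
    have hrep2 : IsFactor W (List.replicate (n + 2) cc) := by
      have e := hwb' cc
      rw [hwc, List.cons_append] at e
      rwa [hrepeq] at e
    have hrep1fac : IsFactor W (List.replicate (n + 1) cc) := by
      have e := isFactor_take W hrep2 (n + 1)
      rwa [List.take_replicate, min_eq_left (by omega)] at e
    have hstep1 : IsFactor W (List.replicate (n + 1) cc ++ [!cc]) := by
      by_contra hA
      obtain ⟨x₀, hx₀⟩ := hrep1fac
      rw [List.length_replicate] at hx₀
      have hprop : ∀ t, factorAt W (x₀ + t) (n + 1) = List.replicate (n + 1) cc := by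
        intro t
        induction t with
        | zero => rw [Nat.add_zero]; exact hx₀.symm
        | succ k IH =>
          have hbx : W (x₀ + k + (n + 1)) = cc := by
            rcases bool_eq_or_eq_not (W (x₀ + k + (n + 1))) cc with he | he
            · exact he
            · exfalso
              apply hA
              have e : factorAt W (x₀ + k) (n + 2) = List.replicate (n + 1) cc ++ [!cc] := by
                rw [show n + 2 = (n + 1) + 1 from rfl, factorAt_succ_right, IH, he]
              rw [← e]
              exact isFactor_factorAt W (x₀ + k) (n + 2)
          rw [factorAt_eq_replicate]
          intro s hs
          rcases Nat.lt_or_ge s n with hsn | hsn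
          · have e := (factorAt_eq_replicate W).1 IH (s + 1) (by omega)
            rwa [show x₀ + k + (s + 1) = x₀ + (k + 1) + s by omega] at e
          · have hsn' : s = n := by omega
            rw [hsn', show x₀ + (k + 1) + n = x₀ + k + (n + 1) by omega]
            exact hbx
      apply periodic_false W h x₀ 1 one_pos
      intro z hz
      have e1 : W z = cc := by
        have e := (factorAt_eq_replicate W).1 (hprop (z - x₀)) 0 (by omega)
        rwa [show x₀ + (z - x₀) + 0 = z by omega] at e
      have e2 : W (z + 1) = cc := by
        have e := (factorAt_eq_replicate W).1 (hprop (z + 1 - x₀)) 0 (by omega)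
        rwa [show x₀ + (z + 1 - x₀) + 0 = z + 1 by omega] at e
      rw [e1, e2]
    have hRSrep : RS W (List.replicate (n + 1) cc) := by
      apply RS_of_both W (b := cc)
      · rw [replicate_snoc]
        exact hrep2
      · exact hstep1
    have hB : ¬ IsFactor W ((!cc) :: List.replicate (n + 1) cc) := by
      intro hfac
      have hRS2 : RS W ((!cc) :: List.replicate n cc) := by
        apply RS_of_both W (b := !cc)
        · have e := hwb' (!cc)
          rwa [hwc] at e
        · simp only [Bool.not_not]
          rw [List.cons_append, replicate_snoc]
          exact hfac
      have e := RS_unique W h (k := n + 1) (by simp) hRS2 (by simp) hRSrep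
      rw [List.replicate_succ] at e
      injection e with hh _
      simp at hh
    have hdown : ∀ t, factorAt W t (n + 1) = List.replicate (n + 1) cc →
        ∀ s, s ≤ t → W s = cc := by
      intro t
      induction t with
      | zero =>
        intro he s hs
        have e := (factorAt_eq_replicate W).1 he 0 (by omega)
        have hs0 : s = 0 := by omega
        rw [hs0]
        simpa using e
      | succ k IH =>
        intro he s hs
        have hWk : W k = cc := by
          rcases bool_eq_or_eq_not (W k) cc with e | e
          · exact e
          · exfalso
            apply hB
            have e2 : factorAt W k (n + 2) = (!cc) :: List.replicate (n + 1) cc := by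
              rw [show n + 2 = (n + 1) + 1 from rfl, factorAt_succ_left, he, e]
            rw [← e2]
            exact isFactor_factorAt W k (n + 2)
        have hwin : factorAt W k (n + 1) = List.replicate (n + 1) cc := by
          rw [factorAt_eq_replicate]
          intro s' hs'
          rcases Nat.eq_zero_or_pos s' with rfl | hpos
          · rw [Nat.add_zero]; exact hWk
          · have e := (factorAt_eq_replicate W).1 he (s' - 1) (by omega)
            rwa [show k + 1 + (s' - 1) = k + s' by omega] at e
        rcases Nat.lt_or_ge s (k + 1) with hsk | hsk
        · exact IH hwin s (by omega)
        · have hs1 : s = k + 1 := by omega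
          have e := (factorAt_eq_replicate W).1 he 0 (by omega)
          rw [Nat.add_zero] at e
          rwa [hs1]
    obtain ⟨z, hz⟩ := hwb (!cc)
    have hzlen : (((!cc) :: w) ++ [!cc]).length = n + 2 := by simp [hn]
    have hz' : factorAt W z (n + 2) = (!cc) :: (w ++ [!cc]) := by
      have e := hz
      rw [← List.cons_append] at e
      rw [hzlen] at e
      rw [← e, List.cons_append]
    have hWz : W z = !cc := (window_cons W (k := n + 1) hz').1
    have hmem : List.replicate (n + 1) cc ∈ FS W (n + 1) :=
      (mem_FS W).2 ⟨by simp, hrep1fac⟩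
    obtain ⟨x, hxz, hxe⟩ := exists_occ W h hmem z
    have hfin := hdown x hxe.symm z hxz
    rw [hWz] at hfin
    simp at hfin
  · -- CASE II : w not constant
    push_neg at hconst
    have hn1 : 1 ≤ n := by
      by_contra hcc
      have hwnil : w = [] := by
        apply List.length_eq_zero_iff.1
        omega
      have hn0 : n = 0 := by omega
      exact hconst true (by rw [hwnil, hn0]; rfl)
    have hne1 : ∀ d : Bool, c :: w ≠ w ++ [d] := by
      intro d he
      exact hconst c (by rw [hn]; exact (cons_eq_append_singleton he).2)
    have hnoRS_other : ¬ RS W ((!c) :: w) := by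
      intro hRS
      have e := RS_unique W h (k := n + 1) (by simp [hn]) hRS (by simp [hn]) hrRS
      injection e with hh
      simp at hh
    have hno : ¬ IsFactor W (((!c) :: w) ++ [c]) := by
      intro hfac
      apply hnoRS_other
      apply RS_of_both W (b := c) hfac
      exact hwb' (!c)
    obtain ⟨l, hllen, hlLS⟩ := LS_exists W h (n + 1)
    have hboth : ∀ b : Bool, IsFactor W (b :: l) := by
      intro b
      cases b
      · exact hlLS.1
      · exact hlLS.2
    have hltake : l.take n = w := by
      apply LS_unique W h (k := n) (by rw [List.length_take, hllen]; omega) _ hn.symm hwLS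
      constructor
      · have e := isFactor_take W hlLS.1 (n + 1)
        rwa [List.take_succ_cons] at e
      · have e := isFactor_take W hlLS.2 (n + 1)
        rwa [List.take_succ_cons] at e
    obtain ⟨y, hyl⟩ : ∃ y, l = w ++ [y] := by
      obtain ⟨y, hy⟩ : ∃ b, l.drop n = [b] := by
        apply List.length_eq_one_iff.1
        rw [List.length_drop, hllen]
        omega
      exact ⟨y, by rw [← hltake, ← hy, List.take_append_drop]⟩
    have hyval : y = !c := by
      rcases bool_eq_or_eq_not y c with he | he
      · exfalso
        apply hno
        have e := hboth (!c)
        rw [hyl, he] at e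
        rwa [← List.cons_append] at e
      · exact he
    have hF : IsFactor W ((c :: w) ++ [!c]) := by
      have e := hboth c
      rw [hyl, hyval] at e
      rwa [← List.cons_append] at e
    obtain ⟨i, hi⟩ := hF
    have hilen : ((c :: w) ++ [!c]).length = n + 2 := by simp [hn]
    rw [hilen] at hi
    obtain ⟨hwin_i, hWext⟩ := window_snoc W (k := n + 1) hi.symm
    obtain ⟨hWi, hmid_i⟩ := window_cons W hwin_i
    have hwin_i1 : factorAt W (i + 1) (n + 1) = w ++ [!c] := by
      rw [factorAt_succ_right, hmid_i, show i + 1 + n = i + (n + 1) by omega, hWext]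
    have hexj : ∃ jj, (i + 1 ≤ jj) ∧ factorAt W jj (n + 1) = c :: w := by
      have hmemcw : c :: w ∈ FS W (n + 1) := (mem_FS W).2 ⟨by simp [hn], hfac_cw c⟩
      obtain ⟨x, hx1, hx2⟩ := exists_occ W h hmemcw (i + 1)
      exact ⟨x, hx1, hx2.symm⟩
    obtain ⟨hji, hjwin⟩ := Nat.find_spec hexj
    set j := Nat.find hexj with hjdef
    have hmin : ∀ t, i < t → t < j → factorAt W t (n + 1) ≠ c :: w := by
      intro t h1 h2 he
      exact Nat.find_min hexj h2 ⟨by omega, he⟩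
    have hj2 : i + 1 < j := by
      rcases Nat.lt_or_ge (i + 1) j with e | e
      · exact e
      · exfalso
        have ej : j = i + 1 := by omega
        rw [ej, hwin_i1] at hjwin
        exact hne1 (!c) hjwin.symm
    have hdet : ∀ x y, factorAt W x (n + 1) = factorAt W y (n + 1) →
        factorAt W x (n + 1) ≠ c :: w →
        factorAt W (x + 1) (n + 1) = factorAt W (y + 1) (n + 1) := by
      intro x y hxy hxr
      have hext : W (x + (n + 1)) = W (y + (n + 1)) := by
        rcases bool_eq_or_eq_not (W (x + (n + 1))) (W (y + (n + 1))) with e | e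
        · exact e
        · exfalso
          apply hxr
          apply RS_unique W h (k := n + 1) (length_factorAt W x (n + 1)) ?_ (by simp [hn]) hrRS
          apply RS_of_both W (b := W (x + (n + 1)))
          · rw [← factorAt_succ_right]
            exact isFactor_factorAt W x (n + 2)
          · rw [e, Bool.not_not, hxy, ← factorAt_succ_right]
            exact isFactor_factorAt W y (n + 2)
      apply factorAt_ext
      intro s hs
      rcases Nat.lt_or_ge s n with hsn | hsn
      · have e := (factorAt_ext_iff W).1 hxy (s + 1) (by omega)
        rwa [show x + (s + 1) = x + 1 + s by omega, show y + (s + 1) = y + 1 + s by omega] at e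
      · have hs1 : s = n := by omega
        rw [hs1, show x + 1 + n = x + (n + 1) by omega, show y + 1 + n = y + (n + 1) by omega]
        exact hext
    have hinj : ∀ s t, i < s → s < t → t < j →
        factorAt W s (n + 1) = factorAt W t (n + 1) → False := by
      intro s t h1 h2 h3 heqst
      have hstep : ∀ rr, rr ≤ j - t →
          factorAt W (s + rr) (n + 1) = factorAt W (t + rr) (n + 1) := by
        intro rr
        induction rr with
        | zero => intro _; simpa using heqst
        | succ k IH =>
          intro hk
          have e1 := IH (by omega)
          have e2 := hdet (s + k) (t + k) e1 (hmin (s + k) (by omega) (by omega))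
          rwa [show s + k + 1 = s + (k + 1) by omega, show t + k + 1 = t + (k + 1) by omega] at e2
      have hfin := hstep (j - t) (le_refl _)
      rw [show t + (j - t) = j by omega, hjwin] at hfin
      exact hmin (s + (j - t)) (by omega) (by omega) hfin
    have hexcl1 : ∀ t, i < t → t < j → factorAt W t (n + 1) ≠ w ++ [c] := by
      intro t h1 h2 he
      have e1 : factorAt W (t - 1) (n + 2) = W (t - 1) :: (w ++ [c]) := by
        rw [show n + 2 = (n + 1) + 1 from rfl, factorAt_succ_left]
        congr 1
        rw [show t - 1 + 1 = t by omega]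
        exact he
      have hWt1 : W (t - 1) = c := by
        rcases bool_eq_or_eq_not (W (t - 1)) c with e | e
        · exact e
        · exfalso
          apply hno
          rw [e] at e1
          rw [← List.cons_append] at e1
          rw [← e1]
          exact isFactor_factorAt W (t - 1) (n + 2)
      have e2 : factorAt W (t - 1) (n + 1) = c :: w := by
        have e3 : factorAt W (t - 1) (n + 1) = W (t - 1) :: factorAt W (t - 1 + 1) n :=
          factorAt_succ_left W (t - 1) n
        rw [show t - 1 + 1 = t by omega] at e3
        have e4 : factorAt W t n = w := by
          have e5 := factorAt_take W t (n + 1) n (by omega)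
          rw [he] at e5
          rw [← e5, hn]
          exact List.take_left (l₁ := w) (l₂ := [c])
        rw [e3, hWt1, e4]
      rcases Nat.lt_or_ge i (t - 1) with e | e
      · exact hmin (t - 1) e (by omega) e2
      · have et : t = i + 1 := by omega
        rw [et, hwin_i1] at he
        have := (append_singleton_inj he).2
        simp at this
    have hexcl2 : ∀ t, i < t → t < j → factorAt W t (n + 1) ≠ (!c) :: w := by
      intro t h1 h2 he
      have hWt : W (t + (n + 1)) = !c := by
        rcases bool_eq_or_eq_not (W (t + (n + 1))) (!c) with e | e
        · exact e
        · rw [Bool.not_not] at e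
          exfalso
          apply hno
          have e1 : factorAt W t (n + 2) = ((!c) :: w) ++ [c] := by
            rw [show n + 2 = (n + 1) + 1 from rfl, factorAt_succ_right, he, e]
          rw [← e1]
          exact isFactor_factorAt W t (n + 2)
      obtain ⟨hWt0, hmid_t⟩ := window_cons W he
      have e2 : factorAt W (t + 1) (n + 1) = w ++ [!c] := by
        rw [factorAt_succ_right, hmid_t, show t + 1 + n = t + (n + 1) by omega, hWt]
      rcases Nat.lt_or_ge (t + 1) j with e | e
      · exact hinj (i + 1) (t + 1) (by omega) (by omega) e (by rw [hwin_i1, e2])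
      · have et : t + 1 = j := by omega
        rw [et, hjwin] at e2
        exact hne1 (!c) e2
    have hmemcw : (c :: w) ∈ FS W (n + 1) := (mem_FS W).2 ⟨by simp [hn], hfac_cw c⟩
    have hmemwc : (w ++ [c]) ∈ FS W (n + 1) := (mem_FS W).2 ⟨by simp [hn], hfac_wc c⟩
    have hmemnc : ((!c) :: w) ∈ FS W (n + 1) := (mem_FS W).2 ⟨by simp [hn], hfac_cw (!c)⟩
    have dne1 : (w ++ [c]) ≠ (c :: w) := fun e => hne1 c e.symm
    have dne2 : ((!c) :: w) ≠ (c :: w) := by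
      intro e
      injection e with e1
      simp at e1
    have dne3 : ((!c) :: w) ≠ (w ++ [c]) := by
      intro e
      have := (cons_eq_append_singleton e).1
      simp at this
    set T := (((FS W (n + 1)).erase (c :: w)).erase (w ++ [c])).erase ((!c) :: w) with hT
    have hcFS : (FS W (n + 1)).card = n + 2 := by rw [card_FS, h (n + 1) (by omega)]
    have hcardT : T.card = n - 1 := by
      rw [hT]
      rw [Finset.card_erase_of_mem (Finset.mem_erase.2 ⟨dne3, Finset.mem_erase.2 ⟨dne2, hmemnc⟩⟩)]
      rw [Finset.card_erase_of_mem (Finset.mem_erase.2 ⟨dne1, hmemwc⟩)]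
      rw [Finset.card_erase_of_mem hmemcw]
      rw [hcFS]
      omega
    have hIoo : ∀ t ∈ Finset.Ioo i j, factorAt W t (n + 1) ∈ T := by
      intro t ht
      rw [Finset.mem_Ioo] at ht
      exact Finset.mem_erase.2 ⟨hexcl2 t ht.1 ht.2, Finset.mem_erase.2 ⟨hexcl1 t ht.1 ht.2,
        Finset.mem_erase.2 ⟨hmin t ht.1 ht.2, factorAt_mem_FS W t (n + 1)⟩⟩⟩
    have hcard_le : (Finset.Ioo i j).card ≤ T.card := by
      apply Finset.card_le_card_of_injOn _ hIoo
      intro s hs t ht hval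
      rw [Finset.coe_Ioo, Set.mem_Ioo] at hs ht
      by_contra hnest
      rcases Nat.lt_or_ge s t with e | e
      · exact hinj s t hs.1 e ht.2 hval
      · have e2 : t < s := by omega
        exact hinj t s ht.1 (by omega) hs.2 hval.symm
    rw [Nat.card_Ioo, hcardT] at hcard_le
    set L := j - i with hL
    have hL2 : 2 ≤ L := by omega
    have hLn : L ≤ n := by omega
    obtain ⟨hWj, hmid_j⟩ := window_cons W hjwin
    have hptw : ∀ s, s < n → W (i + 1 + s) = W (j + 1 + s) :=
      (factorAt_ext_iff W).1 (hmid_i.trans hmid_j.symm)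
    have hpp : ∀ s, s < n → W (i + 1 + s) = W (i + 1 + (n - 1 - s)) := by
      apply pal_pointwise
      rw [hmid_i]
      exact hwpal
    have c3 : W (i + 1 + (L - 1)) = c := by
      rw [show i + 1 + (L - 1) = j by omega]
      exact hWj
    have c4 : W (i + 1 + (n - L)) = c := by
      have e := hpp (L - 1) (by omega)
      rw [show n - 1 - (L - 1) = n - L by omega] at e
      rw [← e]
      exact c3
    have c5 : W (j + 1 + (n - L)) = c := by
      rw [← hptw (n - L) (by omega)]
      exact c4
    have c6 : W (i + (n + 1)) = c := by
      rw [show i + (n + 1) = j + 1 + (n - L) by omega]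
      exact c5
    rw [hWext] at c6
    simp at c6

end Stm

namespace Stm

variable (W : ℕ → Bool)

theorem main (h : ∀ n : ℕ, 1 ≤ n → complexity W n = n + 1) :
    ∃ ρ : ℝ, Irrational ρ ∧
      Filter.Tendsto (fun n : ℕ => ((factorAt W 0 n).count true : ℝ) / n)
        Filter.atTop (nhds ρ) := by
  classical
  have hbal := balance W h
  set a : ℕ → ℕ := fun n => cnt W 0 n with ha
  have hadd : ∀ m k, a (m + k) = a m + cnt W m k := by
    intro m k
    have e := cnt_add W 0 m k
    simpa using e
  have hsub : ∀ m k, a (m + k) ≤ a m + a k + 1 := by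
    intro m k
    have h1 := hadd m k
    have h2 := hbal k m 0
    simp only [ha] at *
    omega
  have hsup : ∀ m k, a m + a k ≤ a (m + k) + 1 := by
    intro m k
    have h1 := hadd m k
    have h2 := hbal k 0 m
    simp only [ha] at *
    omega
  have hle : ∀ k, a k ≤ k := fun k => cnt_le W 0 k
  set u : ℕ → ℝ := fun n => (a n : ℝ) + 1 with hu
  have hsubu : Subadditive u := by
    intro m k
    have e := hsub m k
    simp only [hu]
    have e2 : ((a (m + k) : ℝ)) ≤ (a m : ℝ) + (a k : ℝ) + 1 := by exact_mod_cast e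
    linarith
  have hbddu : BddBelow (Set.range fun n : ℕ => u n / n) := by
    refine ⟨0, ?_⟩
    rintro x ⟨n, rfl⟩
    apply div_nonneg _ (by positivity)
    simp only [hu]
    positivity
  set g : ℕ → ℝ := fun n => 1 - (a n : ℝ) with hg
  have hsubg : Subadditive g := by
    intro m k
    have e := hsup m k
    simp only [hg]
    have e2 : (a m : ℝ) + (a k : ℝ) ≤ (a (m + k) : ℝ) + 1 := by exact_mod_cast e
    linarith
  have hbddg : BddBelow (Set.range fun n : ℕ => g n / n) := by
    refine ⟨-1, ?_⟩
    rintro x ⟨n, rfl⟩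
    rcases Nat.eq_zero_or_pos n with rfl | hn
    · simp [hg]
    · have hnr : (0 : ℝ) < n := by positivity
      rw [le_div_iff₀ hnr]
      have e : (a n : ℝ) ≤ n := by exact_mod_cast hle n
      simp only [hg]
      linarith
  set ρ : ℝ := hsubu.lim with hρ
  have htu := hsubu.tendsto_lim hbddu
  have htg := hsubg.tendsto_lim hbddg
  have hsum0 : Filter.Tendsto (fun n : ℕ => u n / n + g n / n) Filter.atTop
      (nhds (ρ + hsubg.lim)) := htu.add htg
  have hsum0' : Filter.Tendsto (fun n : ℕ => u n / n + g n / n) Filter.atTop (nhds 0) := by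
    have he : (fun n : ℕ => u n / n + g n / n) = fun n : ℕ => 2 / (n : ℝ) := by
      funext n
      rw [← add_div]
      congr 1
      simp only [hu, hg]
      ring
    rw [he]
    exact tendsto_const_div_atTop_nhds_zero_nat 2
  have hlims : ρ + hsubg.lim = 0 := tendsto_nhds_unique hsum0 hsum0'
  have hupper : ∀ n : ℕ, n ≠ 0 → (n : ℝ) * ρ ≤ (a n : ℝ) + 1 := by
    intro n hn
    have e := hsubu.lim_le_div hbddu hn
    have hnr : (0 : ℝ) < n := by
      have := Nat.pos_of_ne_zero hn
      positivity
    rw [le_div_iff₀ hnr] at e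
    simp only [hu] at e
    calc (n : ℝ) * ρ = ρ * n := by ring
    _ ≤ _ := e
  have hlower : ∀ n : ℕ, n ≠ 0 → (a n : ℝ) - 1 ≤ (n : ℝ) * ρ := by
    intro n hn
    have e := hsubg.lim_le_div hbddg hn
    have hnr : (0 : ℝ) < n := by
      have := Nat.pos_of_ne_zero hn
      positivity
    rw [le_div_iff₀ hnr] at e
    have e2 : hsubg.lim = -ρ := by linarith
    rw [e2] at e
    simp only [hg] at e
    nlinarith
  have htend : Filter.Tendsto (fun n : ℕ => (a n : ℝ) / n) Filter.atTop (nhds ρ) := by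
    have h1 : Filter.Tendsto (fun n : ℕ => u n / n - 1 / n) Filter.atTop (nhds (ρ - 0)) :=
      htu.sub (tendsto_const_div_atTop_nhds_zero_nat 1)
    rw [sub_zero] at h1
    apply h1.congr
    intro n
    rw [div_sub_div_same]
    congr 1
    simp [hu]
  have hirr : Irrational ρ := by
    intro hmem
    obtain ⟨x, hx⟩ := hmem
    set q : ℕ := x.den with hq
    set p : ℤ := x.num with hp
    have hq1 : 1 ≤ q := x.pos
    have hqne : (q : ℝ) ≠ 0 := by
      have : (0:ℝ) < q := by exact_mod_cast hq1
      linarith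
    have hqρ : (q : ℝ) * ρ = (p : ℝ) := by
      have h0 : (x : ℝ) = (p : ℝ) / (q : ℝ) := by rw [hp, hq, Rat.cast_def]
      rw [← hx, h0]
      field_simp
    have hZ : ∀ n : ℕ, n ≠ 0 → (p * n ≤ q * (a n : ℤ) + q ∧ (q : ℤ) * (a n : ℤ) ≤ p * n + q) := by
      intro n hn
      have hqr : (0 : ℝ) ≤ (q : ℝ) := by positivity
      constructor
      · have h1 := hupper n hn
        have h2 : (q : ℝ) * ((n : ℝ) * ρ) ≤ (q : ℝ) * ((a n : ℝ) + 1) :=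
          mul_le_mul_of_nonneg_left h1 hqr
        rw [show (q : ℝ) * ((n : ℝ) * ρ) = (n : ℝ) * ((q : ℝ) * ρ) by ring, hqρ] at h2
        have h3 : ((p * n : ℤ) : ℝ) ≤ ((q * (a n : ℤ) + q : ℤ) : ℝ) := by push_cast; nlinarith
        exact_mod_cast h3
      · have h1 := hlower n hn
        have h2 : (q : ℝ) * ((a n : ℝ) - 1) ≤ (q : ℝ) * ((n : ℝ) * ρ) :=
          mul_le_mul_of_nonneg_left h1 hqr
        rw [show (q : ℝ) * ((n : ℝ) * ρ) = (n : ℝ) * ((q : ℝ) * ρ) by ring, hqρ] at h2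
        have h3 : ((q * (a n : ℤ) : ℤ) : ℝ) ≤ ((p * n + q : ℤ) : ℝ) := by push_cast; nlinarith
        exact_mod_cast h3
    set v : ℕ → ℕ := fun i => cnt W i q with hv
    have hSne : Set.Nonempty {kk | ∃ i, v i = kk} := ⟨v 0, 0, rfl⟩
    set mm := sInf {kk | ∃ i, v i = kk} with hmm
    obtain ⟨im, him⟩ : ∃ i, v i = mm := Nat.sInf_mem hSne
    have hv2 : ∀ i, v i = mm ∨ v i = mm + 1 := by
      intro i
      have h1 : mm ≤ v i := Nat.sInf_le ⟨i, rfl⟩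
      have h2 : v i ≤ v im + 1 := hbal q i im
      omega
    have htel : ∀ N, (∑ i ∈ Finset.range N, v i) + (∑ i ∈ Finset.range q, a i)
        = ∑ i ∈ Finset.range q, a (N + i) := by
      intro N
      induction N with
      | zero => simp
      | succ k IH =>
        rw [Finset.sum_range_succ]
        have e1 : v k + a k = a (k + q) := by
          have e := hadd k q
          simp only [hv, ha] at *
          omega
        have l1 : ∑ i ∈ Finset.range (q + 1), a (k + i)
            = (∑ i ∈ Finset.range q, a (k + i)) + a (k + q) := Finset.sum_range_succ _ q
        have l2 : ∑ i ∈ Finset.range (q + 1), a (k + i)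
            = (∑ i ∈ Finset.range q, a (k + (i + 1))) + a (k + 0) := Finset.sum_range_succ' _ q
        have l3 : (∑ i ∈ Finset.range q, a (k + (i + 1)))
            = ∑ i ∈ Finset.range q, a (k + 1 + i) := by
          apply Finset.sum_congr rfl
          intro i _
          congr 1
          omega
        rw [l3] at l2
        simp only [Nat.add_zero] at l2
        omega
    -- integer versions
    set C0 : ℤ := ∑ i ∈ Finset.range q, (a i : ℤ) with hC0
    set C1 : ℤ := ∑ i ∈ Finset.range q, (p * (i : ℤ)) with hC1
    have htelZ : ∀ N, (∑ i ∈ Finset.range N, (v i : ℤ))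
        = (∑ i ∈ Finset.range q, (a (N + i) : ℤ)) - C0 := by
      intro N
      have e := htel N
      have e2 : ((∑ i ∈ Finset.range N, v i : ℕ) : ℤ) + ((∑ i ∈ Finset.range q, a i : ℕ) : ℤ)
          = ((∑ i ∈ Finset.range q, a (N + i) : ℕ) : ℤ) := by exact_mod_cast e
      push_cast at e2
      rw [hC0]
      linarith
    have hsum_bounds : ∀ N : ℕ, N ≠ 0 →
        (p * q * N + C1 - q * q ≤ q * (∑ i ∈ Finset.range q, (a (N + i) : ℤ)) ∧
        q * (∑ i ∈ Finset.range q, (a (N + i) : ℤ)) ≤ p * q * N + C1 + q * q) := by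
      intro N hN
      have hD : (∑ i ∈ Finset.range q, (p * ((N : ℤ) + i))) = p * q * N + C1 := by
        have e : ∀ i ∈ Finset.range q, p * ((N : ℤ) + i) = p * N + p * i := by
          intro i _; ring
        rw [Finset.sum_congr rfl e, Finset.sum_add_distrib, Finset.sum_const, Finset.card_range,
          hC1, nsmul_eq_mul]
        ring
      have hmulsum : q * (∑ i ∈ Finset.range q, (a (N + i) : ℤ))
          = ∑ i ∈ Finset.range q, (q : ℤ) * (a (N + i) : ℤ) := Finset.mul_sum _ _ _
      constructor
      · rw [hmulsum]
        have e1 : ∑ i ∈ Finset.range q, (p * ((N : ℤ) + i) - q)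
            ≤ ∑ i ∈ Finset.range q, (q : ℤ) * (a (N + i) : ℤ) := by
          apply Finset.sum_le_sum
          intro i _
          have e2 := (hZ (N + i) (by omega)).1
          push_cast at e2 ⊢
          linarith
        rw [Finset.sum_sub_distrib, Finset.sum_const, Finset.card_range, nsmul_eq_mul, hD] at e1
        linarith
      · rw [hmulsum]
        have e1 : ∑ i ∈ Finset.range q, (q : ℤ) * (a (N + i) : ℤ)
            ≤ ∑ i ∈ Finset.range q, (p * ((N : ℤ) + i) + q) := by
          apply Finset.sum_le_sum
          intro i _
          have e2 := (hZ (N + i) (by omega)).2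
          push_cast at e2 ⊢
          linarith
        rw [Finset.sum_add_distrib, Finset.sum_const, Finset.card_range, nsmul_eq_mul, hD] at e1
        linarith
    -- eventually constant
    have hevc : ∃ i₀ V₀, ∀ i, i₀ ≤ i → v i = V₀ := by
      rcases Int.lt_or_le (mm : ℤ) p with hpm | hpm
      · -- mm + 1 ≤ p : v is eventually mm + 1
        set K : ℤ := q * q - C1 + q * C0 with hK
        have hdbound : ∀ N : ℕ, N ≠ 0 →
            (((Finset.range N).filter (fun i => v i = mm)).card : ℤ) ≤ K := by
          intro N hN
          set dN := ((Finset.range N).filter (fun i => v i = mm)).card with hdN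
          have hsum : (∑ i ∈ Finset.range N, v i) + dN = N * (mm + 1) := by
            have e : ∀ i ∈ Finset.range N, v i + (if v i = mm then 1 else 0) = mm + 1 := by
              intro i _
              rcases hv2 i with e | e
              · rw [e, if_pos rfl]
              · rw [e, if_neg (by omega)]
            have e2 : ∑ i ∈ Finset.range N, (v i + (if v i = mm then 1 else 0))
                = ∑ i ∈ Finset.range N, (mm + 1) := Finset.sum_congr rfl e
            rw [Finset.sum_add_distrib, Finset.sum_const, Finset.card_range] at e2
            rw [hdN, Finset.card_filter]
            simp only [smul_eq_mul, mul_comm] at e2 ⊢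
            omega
          have hlow := (hsum_bounds N hN).1
          have hqe : (q : ℤ) * (∑ i ∈ Finset.range N, (v i : ℤ))
              = q * (∑ i ∈ Finset.range q, (a (N + i) : ℤ)) - q * C0 := by
            rw [htelZ N]; ring
          have hcast : (∑ i ∈ Finset.range N, (v i : ℤ)) + (dN : ℤ) = N * (mm + 1) := by
            exact_mod_cast hsum
          have hq' : (1 : ℤ) ≤ q := by exact_mod_cast hq1
          have hq2 : (q : ℤ) * ((∑ i ∈ Finset.range N, (v i : ℤ)) + (dN : ℤ))
              = q * (N * (mm + 1)) := by rw [hcast]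
          have hql : (0:ℤ) ≤ (q : ℤ) * N := by positivity
          have hx1 : (q : ℤ) * N * ((mm : ℤ) + 1) ≤ (q : ℤ) * N * p :=
            mul_le_mul_of_nonneg_left (by omega) hql
          have hdq : (q : ℤ) * dN ≤ K := by nlinarith [hq2, hqe, hlow, hx1]
          have hdN0 : (0:ℤ) ≤ (dN : ℤ) := by positivity
          nlinarith [hdq, hq', hdN0]
        -- the set {i | v i = mm} is finite
        have hfin : {i : ℕ | v i = mm}.Finite := by
          by_contra hinf
          have hinf' : Set.Infinite _ := hinf
          obtain ⟨F, hFsub, hFcard⟩ := hinf'.exists_subset_card_eq (K.toNat + 1)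
          have hFne : F.Nonempty := by
            rw [← Finset.card_pos, hFcard]; omega
          set N := F.max' hFne + 1 with hN
          have hsubF : F ⊆ (Finset.range N).filter (fun i => v i = mm) := by
            intro i hi
            rw [Finset.mem_filter, Finset.mem_range]
            exact ⟨by have := Finset.le_max' F i hi; omega, hFsub hi⟩
          have := Finset.card_le_card hsubF
          rw [hFcard] at this
          have h2 := hdbound N (by omega)
          have h3 : (0:ℤ) ≤ K := le_trans (by positivity) h2
          omega
        obtain ⟨B, hB⟩ := hfin.bddAbove
        refine ⟨B + 1, mm + 1, ?_⟩
        intro i hi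
        rcases hv2 i with e | e
        · exfalso
          have : i ≤ B := hB e
          omega
        · exact e
      · -- p ≤ mm : v is eventually mm
        set K : ℤ := C1 + q * q - q * C0 with hK
        have hcbound : ∀ N : ℕ, N ≠ 0 →
            (((Finset.range N).filter (fun i => v i = mm + 1)).card : ℤ) ≤ K := by
          intro N hN
          set cN := ((Finset.range N).filter (fun i => v i = mm + 1)).card with hcN
          have hsum : (∑ i ∈ Finset.range N, v i) = N * mm + cN := by
            have e : ∀ i ∈ Finset.range N, v i = mm + (if v i = mm + 1 then 1 else 0) := by
              intro i _
              rcases hv2 i with e | e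
              · rw [e, if_neg (by omega)]; omega
              · rw [e, if_pos rfl]
            have e2 : ∑ i ∈ Finset.range N, v i
                = ∑ i ∈ Finset.range N, (mm + (if v i = mm + 1 then 1 else 0)) :=
              Finset.sum_congr rfl e
            rw [Finset.sum_add_distrib, Finset.sum_const, Finset.card_range] at e2
            rw [hcN, Finset.card_filter]
            simp only [smul_eq_mul] at e2 ⊢
            omega
          have hhigh := (hsum_bounds N hN).2
          have hqe : (q : ℤ) * (∑ i ∈ Finset.range N, (v i : ℤ))
              = q * (∑ i ∈ Finset.range q, (a (N + i) : ℤ)) - q * C0 := by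
            rw [htelZ N]; ring
          have hcast : (∑ i ∈ Finset.range N, (v i : ℤ)) = N * mm + (cN : ℤ) := by
            exact_mod_cast hsum
          have hq' : (1 : ℤ) ≤ q := by exact_mod_cast hq1
          have hq2 : (q : ℤ) * ((N : ℤ) * mm + (cN : ℤ))
              = q * (∑ i ∈ Finset.range N, (v i : ℤ)) := by rw [hcast]
          have hql : (0:ℤ) ≤ (q : ℤ) * N := by positivity
          have hx1 : (q : ℤ) * N * p ≤ (q : ℤ) * N * (mm : ℤ) :=
            mul_le_mul_of_nonneg_left (by omega) hql
          have hdq : (q : ℤ) * cN ≤ K := by nlinarith [hq2, hqe, hhigh, hx1]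
          have hcN0 : (0:ℤ) ≤ (cN : ℤ) := by positivity
          nlinarith [hdq, hq', hcN0]
        have hfin : {i : ℕ | v i = mm + 1}.Finite := by
          by_contra hinf
          have hinf' : Set.Infinite _ := hinf
          obtain ⟨F, hFsub, hFcard⟩ := hinf'.exists_subset_card_eq (K.toNat + 1)
          have hFne : F.Nonempty := by
            rw [← Finset.card_pos, hFcard]; omega
          set N := F.max' hFne + 1 with hN
          have hsubF : F ⊆ (Finset.range N).filter (fun i => v i = mm + 1) := by
            intro i hi
            rw [Finset.mem_filter, Finset.mem_range]
            exact ⟨by have := Finset.le_max' F i hi; omega, hFsub hi⟩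
          have := Finset.card_le_card hsubF
          rw [hFcard] at this
          have h2 := hcbound N (by omega)
          have h3 : (0:ℤ) ≤ K := le_trans (by positivity) h2
          omega
        obtain ⟨B, hB⟩ := hfin.bddAbove
        refine ⟨B + 1, mm, ?_⟩
        intro i hi
        rcases hv2 i with e | e
        · exact e
        · exfalso
          have : i ≤ B := hB e
          omega
    obtain ⟨i₀, V₀, hev⟩ := hevc
    apply periodic_false W h i₀ q (by omega)
    intro z hz
    have q1 : a (z + q) = a z + v z := by
      have e := hadd z q
      simp only [hv] at *
      omega
    have q2 : a (z + 1 + q) = a (z + 1) + v (z + 1) := by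
      have e := hadd (z + 1) q
      simp only [hv] at *
      omega
    have q3 : a (z + 1) = a z + (W z).toNat := by
      have e := cnt_succ_right W 0 z
      simp only [ha, Nat.zero_add] at *
      omega
    have q4 : a (z + q + 1) = a (z + q) + (W (z + q)).toNat := by
      have e := cnt_succ_right W 0 (z + q)
      simp only [ha, Nat.zero_add] at *
      omega
    have q5 : z + 1 + q = z + q + 1 := by omega
    rw [q5] at q2
    have hv1 : v z = V₀ := hev z hz
    have hv2' : v (z + 1) = V₀ := hev (z + 1) (by omega)
    apply toNat_inj
    omega
  exact ⟨ρ, hirr, htend⟩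

end Stm

/-- For a Sturmian word over `Bool` (`true = a`, `false = b`), the density of the
letter `a` exists and is irrational. -/
theorem stmt9 (W : ℕ → Bool) (h : ∀ n : ℕ, 1 ≤ n → complexity W n = n + 1) :
    ∃ ρ : ℝ, Irrational ρ ∧
      Filter.Tendsto (fun n : ℕ => ((factorAt W 0 n).count true : ℝ) / n)
        Filter.atTop (nhds ρ) :=
  Stm.main W h
end

section
/- Let α ∈ (0, 1) be irrational, let U = [c, c + α) be a half-open arc of length α in the circle ℝ/ℤ, and let x ∈ ℝ/ℤ. Define the infinite word W : ℕ → {a, b} by W(n) = a if x + nα ∈ U and W(n) = b otherwise. Then T_W(n) = n + 1 for all n ≥ 1. -/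
open Int

namespace Stmt10Aux

/-- threshold -/
noncomputable def th (α : ℝ) (j : ℕ) : ℝ := 1 - Int.fract ((j:ℝ) * α)

/-- floor sequence -/
noncomputable def Ffl (α s : ℝ) (j : ℕ) : ℤ := ⌊s + (j:ℝ) * α⌋

/-- the abstract word of length n determined by s -/
noncomputable def om (α s : ℝ) (n : ℕ) : List Bool :=
  (List.range n).map fun j => decide (Ffl α s j < Ffl α s (j+1))

lemma floorForm (α : ℝ) {s : ℝ} (hs : s ∈ Set.Ico (0:ℝ) 1) (j : ℕ) :
    Ffl α s j = ⌊(j:ℝ) * α⌋ + (if th α j ≤ s then 1 else 0) := by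
  have h1 : s + (j:ℝ)*α = (⌊(j:ℝ)*α⌋ : ℝ) + (s + Int.fract ((j:ℝ)*α)) := by
    rw [Int.fract]; ring
  have hf0 := Int.fract_nonneg ((j:ℝ)*α)
  have hf1 := Int.fract_lt_one ((j:ℝ)*α)
  rw [Ffl, h1, Int.floor_intCast_add]
  congr 1
  by_cases h : th α j ≤ s
  · rw [if_pos h, Int.floor_eq_iff]
    rw [th] at h
    constructor <;> push_cast <;> [linarith; linarith [hs.2]]
  · rw [if_neg h, Int.floor_eq_iff]
    rw [th, not_le] at h
    constructor <;> push_cast <;> [linarith [hs.1]; linarith]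

lemma Ffl_zero (α : ℝ) {s : ℝ} (hs : s ∈ Set.Ico (0:ℝ) 1) : Ffl α s 0 = 0 := by
  simp [Ffl, Int.floor_eq_zero_iff, hs]

lemma Ffl_step (α : ℝ) (h0 : 0 < α) (h1 : α < 1) (s : ℝ) (j : ℕ) :
    Ffl α s j ≤ Ffl α s (j+1) ∧ Ffl α s (j+1) ≤ Ffl α s j + 1 := by
  constructor
  · apply Int.floor_le_floor; push_cast; nlinarith
  · rw [Ffl, Ffl, ← Int.floor_add_one]
    apply Int.floor_le_floor; push_cast; nlinarith

lemma om_eq_iff (α : ℝ) (h0 : 0 < α) (h1 : α < 1) (n : ℕ) {s s' : ℝ}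
    (hs : s ∈ Set.Ico (0:ℝ) 1) (hs' : s' ∈ Set.Ico (0:ℝ) 1) :
    om α s n = om α s' n ↔ ∀ j ∈ Finset.Icc 1 n, (th α j ≤ s ↔ th α j ≤ s') := by
  have hlist : om α s n = om α s' n ↔
      ∀ j < n, (Ffl α s j < Ffl α s (j+1) ↔ Ffl α s' j < Ffl α s' (j+1)) := by
    rw [om, om, List.map_inj_left]
    constructor
    · intro h j hj
      have := h j (List.mem_range.mpr hj)
      rwa [decide_eq_decide] at this
    · intro h j hj
      rw [decide_eq_decide]
      exact h j (List.mem_range.mp hj)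
  rw [hlist]
  have hFeq : (∀ j < n, (Ffl α s j < Ffl α s (j+1) ↔ Ffl α s' j < Ffl α s' (j+1))) ↔
      (∀ j ≤ n, Ffl α s j = Ffl α s' j) := by
    constructor
    · intro h j hj
      induction j with
      | zero => rw [Ffl_zero α hs, Ffl_zero α hs']
      | succ k ih =>
        have hk : k < n := hj
        have ihk := ih (le_of_lt hk)
        have h1s := Ffl_step α h0 h1 s k
        have h1s' := Ffl_step α h0 h1 s' k
        have := h k hk
        omega
    · intro h j hj
      rw [h j (le_of_lt hj), h (j+1) hj]
  rw [hFeq]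
  constructor
  · intro h j hj
    have := h j (Finset.mem_Icc.mp hj).2
    rw [floorForm α hs j, floorForm α hs' j] at this
    by_cases h1 : th α j ≤ s <;> by_cases h2 : th α j ≤ s' <;>
      simp [h1, h2] at this ⊢
  · intro h j hj
    rw [floorForm α hs j, floorForm α hs' j]
    rcases Nat.eq_zero_or_pos j with rfl | hj1
    · have hth : ¬ th α 0 ≤ s ∧ ¬ th α 0 ≤ s' := by
        constructor <;> · rw [th]; push_cast; rw [mul_comm]; simp; linarith [hs.2, hs'.2]
      rw [if_neg hth.1, if_neg hth.2]
    · have := h j (Finset.mem_Icc.mpr ⟨hj1, hj⟩)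
      by_cases h1 : th α j ≤ s <;> by_cases h2 : th α j ≤ s' <;> simp [h1, h2] <;> tauto

lemma fract_nat_pos {α : ℝ} (hirr : Irrational α) {j : ℕ} (hj : 1 ≤ j) :
    0 < Int.fract ((j:ℝ) * α) := by
  rcases lt_or_eq_of_le (Int.fract_nonneg ((j:ℝ)*α)) with h | h
  · exact h
  · exfalso
    have hx : (j:ℝ) * α = ⌊(j:ℝ)*α⌋ := by
      rw [Int.fract] at h; linarith
    have hi : Irrational ((j:ℝ) * α) := by
      have hj0 : (j:ℤ) ≠ 0 := by exact_mod_cast Nat.one_le_iff_ne_zero.mp hj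
      have : Irrational (((j:ℤ):ℝ) * α) := hirr.intCast_mul hj0
      simpa using this
    exact hi.ne_int _ hx

lemma th_mem {α : ℝ} (hirr : Irrational α) {j : ℕ} (hj : 1 ≤ j) :
    th α j ∈ Set.Ioo (0:ℝ) 1 := by
  have h1 := Int.fract_lt_one ((j:ℝ)*α)
  have h2 := fract_nat_pos hirr hj
  constructor <;> rw [th] <;> linarith

lemma th_inj {α : ℝ} (hirr : Irrational α) {j k : ℕ} (hjk : j ≠ k) :
    th α j ≠ th α k := by
  intro h
  rw [th, th, sub_right_inj] at h
  rw [Int.fract, Int.fract] at h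
  have hz : ((((j:ℤ) - k : ℤ)):ℝ) * α = ((⌊(j:ℝ)*α⌋ - ⌊(k:ℝ)*α⌋ : ℤ) : ℝ) := by
    push_cast; linarith
  have hne : (j:ℤ) - (k:ℤ) ≠ 0 := sub_ne_zero.mpr (by exact_mod_cast hjk)
  have hI : Irrational (((((j:ℤ) - k : ℤ)):ℝ) * α) := hirr.intCast_mul hne
  exact hI.ne_int _ hz

lemma locConst (α s : ℝ) (n : ℕ) :
    ∃ ε > 0, ∀ s', s ≤ s' → s' < s + ε → om α s' n = om α s n := by
  classical
  have hne : (Finset.range (n+1)).Nonempty := ⟨0, by simp⟩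
  set ε := (Finset.range (n+1)).inf' hne
    (fun j => (⌊s + (j:ℝ)*α⌋ : ℝ) + 1 - (s + (j:ℝ)*α)) with hε
  refine ⟨ε, ?_, ?_⟩
  · rw [gt_iff_lt, hε, Finset.lt_inf'_iff]
    intro j hj
    linarith [Int.lt_floor_add_one (s + (j:ℝ)*α)]
  · intro s' hls hlt
    have hfl : ∀ j ≤ n, ⌊s' + (j:ℝ)*α⌋ = ⌊s + (j:ℝ)*α⌋ := by
      intro j hj
      have hmin : ε ≤ (⌊s + (j:ℝ)*α⌋ : ℝ) + 1 - (s + (j:ℝ)*α) :=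
        Finset.inf'_le _ (Finset.mem_range.mpr (Nat.lt_succ_of_le hj))
      apply le_antisymm
      · have h2 : ⌊s' + (j:ℝ)*α⌋ < ⌊s + (j:ℝ)*α⌋ + 1 := by
          apply Int.floor_lt.mpr; push_cast; linarith
        omega
      · apply Int.floor_le_floor; linarith
    rw [om, om, List.map_inj_left]
    intro j hj
    have hjn := List.mem_range.mp hj
    rw [decide_eq_decide, Ffl, Ffl, Ffl, Ffl,
      hfl j (le_of_lt hjn), hfl (j+1) hjn]

lemma small_step {α : ℝ} (hirr : Irrational α) {ε : ℝ} (hε0 : 0 < ε) (hε1 : ε ≤ 1) :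
    ∃ k : ℕ, 1 ≤ k ∧ 0 < Int.fract ((k:ℝ) * α) ∧ Int.fract ((k:ℝ) * α) < ε := by
  obtain ⟨N, hN⟩ := exists_nat_gt (1/ε)
  have hN1 : 1 ≤ N := by
    by_contra h
    push_neg at h
    interval_cases N
    · simp at hN; nlinarith [one_div_pos.mpr hε0]
  obtain ⟨jz, kz, hk0, hkN, habs⟩ :=
    Real.exists_int_int_abs_mul_sub_le α (Nat.lt_of_lt_of_le Nat.zero_lt_one hN1)
  set η : ℝ := (kz:ℝ) * α - jz with hη
  have hηirr : Irrational η := ((hirr.intCast_mul hk0.ne').sub_intCast jz)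
  have hηne : η ≠ 0 := fun h => (hηirr.ne_int 0) (by rw [h]; norm_cast)
  have hηlt : |η| < ε := by
    have : 1/((N:ℝ)+1) < ε := by
      rw [div_lt_iff₀ (by positivity)]
      rw [div_lt_iff₀ hε0] at hN
      nlinarith
    linarith [habs, abs_nonneg η]
  rcases lt_or_gt_of_ne hηne with hneg | hpos
  · -- η < 0 : use multiples trick
    set δ : ℝ := -η with hδ
    have hδ0 : 0 < δ := by rw [hδ]; linarith
    have hδε : δ < ε := by rw [hδ]; rw [abs_of_neg hneg] at hηlt; linarith
    have hδ1 : δ < 1 := lt_of_lt_of_le hδε hε1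
    set m : ℤ := ⌊1/δ⌋ with hm
    have hm1 : 1 ≤ m := by
      rw [hm]
      apply Int.le_floor.mpr
      rw [le_div_iff₀ hδ0]
      push_cast; linarith
    have hmR : (1:ℝ) ≤ (m:ℝ) := by exact_mod_cast hm1
    have hmδle : (m:ℝ) * δ ≤ 1 := by
      have h1 := Int.floor_le (1/δ)
      rw [← hm] at h1
      calc (m:ℝ) * δ ≤ (1/δ) * δ := by nlinarith
        _ = 1 := by field_simp
    have hmδne : (m:ℝ) * δ ≠ 1 := by
      intro h
      have hδirr : Irrational δ := by
        rw [hδ, hη]; exact ((hirr.intCast_mul hk0.ne').sub_intCast jz).neg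
      have hδeq : δ = (((m:ℚ))⁻¹ : ℚ) := by
        rw [Rat.cast_inv, Rat.cast_intCast]
        field_simp
        linarith [h]
      rw [hδeq] at hδirr
      exact (Rat.not_irrational _) hδirr
    have hmδlt : (m:ℝ) * δ < 1 := lt_of_le_of_ne hmδle hmδne
    have hm1δ : 1 < ((m:ℝ)+1) * δ := by
      have h1 := Int.lt_floor_add_one (1/δ)
      rw [← hm] at h1
      calc (1:ℝ) = (1/δ) * δ := by field_simp
        _ < ((m:ℝ)+1) * δ := by nlinarith
    have hmk : (1:ℤ) ≤ m * kz := by nlinarith [hk0]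
    have hcast : (((m * kz).toNat : ℝ)) = ((m * kz : ℤ) : ℝ) := by
      exact_mod_cast Int.toNat_of_nonneg (by omega : (0:ℤ) ≤ m * kz)
    have harg : (((m * kz).toNat : ℝ)) * α = (1 - (m:ℝ) * δ) + ((m * jz - 1 : ℤ) : ℝ) := by
      rw [hcast, hδ, hη]; push_cast; ring
    have hfr : Int.fract (((m * kz).toNat : ℝ) * α) = 1 - (m:ℝ)*δ := by
      rw [harg, Int.fract_add_intCast]
      apply Int.fract_eq_self.mpr
      constructor <;> nlinarith
    refine ⟨(m * kz).toNat, by omega, ?_, ?_⟩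
    · rw [hfr]; nlinarith
    · rw [hfr]; nlinarith
  · -- η > 0
    have hcast : ((kz.toNat : ℝ)) = ((kz:ℤ):ℝ) := by
      exact_mod_cast Int.toNat_of_nonneg hk0.le
    rw [abs_of_pos hpos] at hηlt
    have harg : ((kz.toNat : ℝ)) * α = η + (jz : ℝ) := by
      rw [hcast, hη]; ring
    have hfr : Int.fract ((kz.toNat : ℝ) * α) = η := by
      rw [harg, Int.fract_add_intCast]
      apply Int.fract_eq_self.mpr
      constructor <;> nlinarith
    refine ⟨kz.toNat, by omega, by rw [hfr]; exact hpos, by rw [hfr]; exact hηlt⟩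

lemma dens {α : ℝ} (hirr : Irrational α) (γ a b : ℝ)
    (ha : 0 ≤ a) (hb : b ≤ 1) (hab : a < b) :
    ∃ i : ℕ, Int.fract (γ + (i:ℝ) * α) ∈ Set.Ioo a b := by
  obtain ⟨k, hk1, hδ0, hδε⟩ := small_step hirr (by linarith : (0:ℝ) < b - a) (by linarith)
  set δ := Int.fract ((k:ℝ) * α) with hδ
  have hγ0 := Int.fract_nonneg γ
  have hγ1 := Int.fract_lt_one γ
  obtain ⟨m, hm1, hmgt, hmle⟩ :
      ∃ m : ℤ, 1 ≤ m ∧ (a + 1 - Int.fract γ) / δ < (m:ℝ) ∧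
        (m:ℝ) ≤ (a + 1 - Int.fract γ) / δ + 1 := by
    refine ⟨⌊(a + 1 - Int.fract γ) / δ⌋ + 1, ?_, ?_, ?_⟩
    · have hL0 : 0 < (a + 1 - Int.fract γ) / δ := div_pos (by linarith) hδ0
      have := Int.floor_nonneg.mpr hL0.le
      omega
    · push_cast; exact Int.lt_floor_add_one _
    · push_cast; linarith [Int.floor_le ((a + 1 - Int.fract γ) / δ)]
  have hLδ : ((a + 1 - Int.fract γ) / δ) * δ = a + 1 - Int.fract γ := by field_simp
  have hlow : a + 1 < Int.fract γ + (m:ℝ) * δ := by nlinarith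
  have hhigh : Int.fract γ + (m:ℝ) * δ < b + 1 := by nlinarith
  refine ⟨m.toNat * k, ?_⟩
  have hcast : ((m.toNat * k : ℕ) : ℝ) = (m:ℝ) * k := by
    have h1 : ((m.toNat : ℕ) : ℝ) = (m:ℝ) := by
      exact_mod_cast congrArg (Int.cast : ℤ → ℝ) (Int.toNat_of_nonneg (by omega : (0:ℤ) ≤ m))
    push_cast [h1]
    ring
  have harg : γ + ((m.toNat * k : ℕ) : ℝ) * α
      = (Int.fract γ + (m:ℝ) * δ - 1) + ((⌊γ⌋ + m * ⌊(k:ℝ)*α⌋ + 1 : ℤ) : ℝ) := by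
    rw [hcast, hδ]
    rw [Int.fract, Int.fract]
    push_cast
    ring
  rw [harg, Int.fract_add_intCast]
  have hself : Int.fract (Int.fract γ + (m:ℝ) * δ - 1) = Int.fract γ + (m:ℝ) * δ - 1 := by
    apply Int.fract_eq_self.mpr
    constructor <;> nlinarith
  rw [hself]
  constructor <;> nlinarith

lemma fractLt (t a : ℝ) : Int.fract t < a ↔ ⌊t - a⌋ < ⌊t⌋ := by
  constructor
  · intro h
    apply Int.floor_lt.mpr
    rw [Int.fract] at h
    have := Int.floor_le t
    linarith
  · intro h
    have := Int.floor_lt.mp h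
    rw [Int.fract]
    linarith

lemma floor_add_eq (y t : ℝ) : ⌊y + t⌋ = ⌊y⌋ + ⌊Int.fract y + t⌋ := by
  conv_lhs => rw [← Int.floor_add_fract y, add_assoc]
  rw [Int.floor_intCast_add]

/-- representative finset -/
noncomputable def DD (α : ℝ) (n : ℕ) : Finset ℝ :=
  insert (0:ℝ) ((Finset.Icc 1 n).image (th α))

lemma DD_sub {α : ℝ} (hirr : Irrational α) (n : ℕ) :
    ∀ d ∈ DD α n, d ∈ Set.Ico (0:ℝ) 1 := by
  intro d hd
  rcases Finset.mem_insert.mp hd with rfl | hd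
  · exact ⟨le_refl 0, one_pos⟩
  · obtain ⟨j, hj, rfl⟩ := Finset.mem_image.mp hd
    have := th_mem hirr (Finset.mem_Icc.mp hj).1
    exact ⟨this.1.le, this.2⟩

lemma DD_card {α : ℝ} (hirr : Irrational α) (n : ℕ) : (DD α n).card = n + 1 := by
  rw [DD, Finset.card_insert_of_notMem, Finset.card_image_of_injOn]
  · rw [Nat.card_Icc]; omega
  · intro j hj k hk hjk
    by_contra hne
    exact th_inj hirr hne hjk
  · intro h
    obtain ⟨j, hj, hje⟩ := Finset.mem_image.mp h
    have := th_mem hirr (Finset.mem_Icc.mp hj).1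
    rw [hje] at this
    exact lt_irrefl 0 this.1

lemma rep {α : ℝ} (hirr : Irrational α) (h0 : 0 < α) (h1 : α < 1) (n : ℕ) {s : ℝ}
    (hs : s ∈ Set.Ico (0:ℝ) 1) :
    ∃ d ∈ DD α n, om α s n = om α d n := by
  classical
  set Φ := (Finset.Icc 1 n).filter (fun j => th α j ≤ s) with hΦ
  rcases Finset.eq_empty_or_nonempty Φ with hem | hne
  · refine ⟨0, Finset.mem_insert_self _ _, ?_⟩
    rw [om_eq_iff α h0 h1 n hs ⟨le_refl 0, one_pos⟩]
    intro j hj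
    constructor
    · intro hle
      exfalso
      have : j ∈ Φ := Finset.mem_filter.mpr ⟨hj, hle⟩
      rw [hem] at this
      exact absurd this (Finset.notMem_empty j)
    · intro hle
      exfalso
      have := (th_mem hirr (Finset.mem_Icc.mp hj).1).1
      linarith
  · set Θ := Φ.image (th α) with hΘ
    have hΘne : Θ.Nonempty := hne.image _
    set t := Θ.max' hΘne with ht
    obtain ⟨j₀, hj₀, hj₀e⟩ := Finset.mem_image.mp (Θ.max'_mem hΘne)
    have hj₀Icc := (Finset.mem_filter.mp hj₀).1
    have hts : t ≤ s := by rw [ht, ← hj₀e]; exact (Finset.mem_filter.mp hj₀).2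
    have htIco : t ∈ Set.Ico (0:ℝ) 1 := by
      rw [ht, ← hj₀e]
      have := th_mem hirr (Finset.mem_Icc.mp hj₀Icc).1
      exact ⟨this.1.le, this.2⟩
    refine ⟨t, ?_, ?_⟩
    · rw [DD, ht, ← hj₀e]
      exact Finset.mem_insert_of_mem (Finset.mem_image_of_mem _ hj₀Icc)
    · rw [om_eq_iff α h0 h1 n hs htIco]
      intro j hj
      constructor
      · intro hle
        have : th α j ∈ Θ := Finset.mem_image_of_mem _ (Finset.mem_filter.mpr ⟨hj, hle⟩)
        exact Θ.le_max' _ this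
      · intro hle
        linarith

lemma om_injOn {α : ℝ} (hirr : Irrational α) (h0 : 0 < α) (h1 : α < 1) (n : ℕ) :
    Set.InjOn (fun s => om α s n) ↑(DD α n) := by
  intro d hd d' hd' heq
  have hdI := DD_sub hirr n d (Finset.mem_coe.mp hd)
  have hdI' := DD_sub hirr n d' (Finset.mem_coe.mp hd')
  have hiff := (om_eq_iff α h0 h1 n hdI hdI').mp heq
  rcases Finset.mem_insert.mp (Finset.mem_coe.mp hd) with rfl | hdm
  · rcases Finset.mem_insert.mp (Finset.mem_coe.mp hd') with rfl | hdm'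
    · rfl
    · exfalso
      obtain ⟨k, hk, rfl⟩ := Finset.mem_image.mp hdm'
      have hpos := (th_mem hirr (Finset.mem_Icc.mp hk).1).1
      have := (hiff k hk).mpr (le_refl _)
      linarith
  · obtain ⟨j, hj, rfl⟩ := Finset.mem_image.mp hdm
    rcases Finset.mem_insert.mp (Finset.mem_coe.mp hd') with rfl | hdm'
    · exfalso
      have hpos := (th_mem hirr (Finset.mem_Icc.mp hj).1).1
      have := (hiff j hj).mp (le_refl _)
      linarith
    · obtain ⟨k, hk, rfl⟩ := Finset.mem_image.mp hdm'
      have h1' := (hiff j hj).mp (le_refl _)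
      have h2' := (hiff k hk).mpr (le_refl _)
      exact le_antisymm h1' h2'

lemma mem_arc (c α : ℝ) (_h0 : 0 < α) (h1 : α < 1) (z : ℝ) :
    ((z : AddCircle (1:ℝ)) ∈ (fun t : ℝ => (t : AddCircle (1:ℝ))) '' Set.Ico c (c + α))
      ↔ Int.fract (z - c) < α := by
  constructor
  · rintro ⟨t, ht, he⟩
    have he' : (t : AddCircle (1:ℝ)) = (z : AddCircle (1:ℝ)) := he
    have hz : ((t - z : ℝ) : AddCircle (1:ℝ)) = 0 := by
      rw [AddCircle.coe_sub, he', sub_self]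
    obtain ⟨m, hm⟩ := (AddCircle.coe_eq_zero_iff (1:ℝ)).mp hz
    rw [zsmul_eq_mul, mul_one] at hm
    have hzc : z - c = (t - c) + (-m : ℤ) := by push_cast; linarith
    rw [hzc, Int.fract_add_intCast]
    rw [Int.fract_eq_self.mpr ⟨by linarith [ht.1], by linarith [ht.2]⟩]
    linarith [ht.2]
  · intro h
    refine ⟨c + Int.fract (z - c), ⟨by linarith [Int.fract_nonneg (z - c)], by linarith⟩, ?_⟩
    show ((c + Int.fract (z - c) : ℝ) : AddCircle (1:ℝ)) = z
    rw [← sub_eq_zero, ← AddCircle.coe_sub]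
    apply (AddCircle.coe_eq_zero_iff (1:ℝ)).mpr
    refine ⟨-⌊z - c⌋, ?_⟩
    rw [zsmul_eq_mul, mul_one, Int.fract]
    push_cast
    ring

end Stmt10Aux

open Stmt10Aux in
/-- The coding of an irrational rotation of the circle `ℝ/ℤ` by a half-open arc
`[c, c + α)` of length equal to the rotation angle `α` has complexity `n + 1`
(`true = a`, `false = b`). -/
theorem stmt10 (α : ℝ) (hirr : Irrational α) (h0 : 0 < α) (h1 : α < 1)
    (c : ℝ) (x : AddCircle (1 : ℝ)) (W : ℕ → Bool)
    (hW : ∀ n : ℕ, W n = true ↔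
      x + ((n * α : ℝ) : AddCircle (1 : ℝ)) ∈
        (fun t : ℝ => (t : AddCircle (1 : ℝ))) '' Set.Ico c (c + α)) :
    ∀ n : ℕ, 1 ≤ n → complexity W n = n + 1 := by
  intro n _hn
  obtain ⟨ξ, hξ⟩ := QuotientAddGroup.mk_surjective x
  set β : ℝ := ξ - c with hβ
  have hWd : ∀ m : ℕ, W m = decide (Int.fract (β + (m:ℝ)*α) < α) := by
    intro m
    have h2 : x + (((m:ℝ) * α : ℝ) : AddCircle (1:ℝ)) = ((ξ + (m:ℝ)*α : ℝ) : AddCircle (1:ℝ)) := by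
      rw [← hξ, AddCircle.coe_add]
    have h3 : (W m = true) ↔ Int.fract (β + (m:ℝ)*α) < α := by
      rw [hW m, h2, mem_arc c α h0 h1 (ξ + (m:ℝ)*α)]
      have : ξ + (m:ℝ)*α - c = β + (m:ℝ)*α := by rw [hβ]; ring
      rw [this]
    rw [Bool.eq_iff_iff, decide_eq_true_iff]
    exact h3
  have hfac : ∀ i : ℕ, factorAt W i n = om α (Int.fract ((β - α) + (i:ℝ)*α)) n := by
    intro i
    rw [factorAt, om, List.map_inj_left]
    intro j hj
    rw [hWd (i+j), decide_eq_decide, fractLt]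
    have e1 : β + ((i+j:ℕ):ℝ)*α - α = (β - α + (i:ℝ)*α) + (j:ℝ)*α := by push_cast; ring
    have e2 : β + ((i+j:ℕ):ℝ)*α = (β - α + (i:ℝ)*α) + ((j+1:ℕ):ℝ)*α := by push_cast; ring
    rw [e1, e2, floor_add_eq (β - α + (i:ℝ)*α) ((j:ℝ)*α),
      floor_add_eq (β - α + (i:ℝ)*α) (((j+1:ℕ):ℝ)*α), Ffl, Ffl]
    exact add_lt_add_iff_left _
  have homlen : ∀ s : ℝ, (om α s n).length = n := by
    intro s; rw [om]; simp
  have hset : {u : List Bool | u.length = n ∧ IsFactor W u}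
      = (fun s => om α s n) '' ↑(DD α n) := by
    apply Set.Subset.antisymm
    · rintro u ⟨hul, i, hui⟩
      rw [hul] at hui
      have hsI : Int.fract ((β - α) + (i:ℝ)*α) ∈ Set.Ico (0:ℝ) 1 :=
        ⟨Int.fract_nonneg _, Int.fract_lt_one _⟩
      obtain ⟨d, hd, hde⟩ := rep hirr h0 h1 n hsI
      exact ⟨d, hd, by show om α d n = u; rw [← hde, ← hfac i, ← hui]⟩
    · rintro u ⟨d, hd, rfl⟩
      have hdI := DD_sub hirr n d hd
      obtain ⟨ε, hε0, hloc⟩ := locConst α d n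
      obtain ⟨i, hi⟩ := dens hirr (β - α) d (min (d+ε) 1) hdI.1 (min_le_right _ _)
        (lt_min (lt_add_of_pos_right _ hε0) hdI.2)
      have hom : om α (Int.fract ((β - α) + (i:ℝ)*α)) n = om α d n :=
        hloc _ hi.1.le (lt_of_lt_of_le hi.2 (min_le_left _ _))
      refine ⟨homlen d, i, ?_⟩
      rw [homlen d, hfac i, hom]
  rw [complexity, hset, Set.ncard_image_of_injOn (om_injOn hirr h0 h1 n),
    Set.ncard_coe_finset, DD_card hirr n]
end

section
/- For every finite balanced word w over the two-letter alphabet {a, b}, there exist letters x, y ∈ {a, b} such that the word wx (w extended by x on the right) is balanced and the word yw (w extended by y on the left) is balanced. -/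
/-- A finite word is balanced if any two of its factors of equal length contain
almost the same number of occurrences of each letter. -/
def BalancedFin {A : Type*} [DecidableEq A] (w : List A) : Prop :=
  ∀ u v : List A, u <:+: w → v <:+: w → u.length = v.length →
    ∀ a : A, |(u.count a : ℤ) - (v.count a : ℤ)| ≤ 1

lemma bal_count_tf (u : List Bool) : u.count true + u.count false = u.length := by
  induction u with
  | nil => simp
  | cons a l ih => cases a <;> simp [List.count_cons] <;> omega

lemma bal_firstDiff : ∀ (t t' : List Bool), t.length = t'.length → t ≠ t' →
    ∃ p a b q q', t = p ++ a :: q ∧ t' = p ++ b :: q' ∧ a ≠ b ∧ q.length = q'.length := by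
  intro t
  induction t with
  | nil =>
    intro t' h hne
    cases t' <;> simp_all
  | cons a r ih =>
    intro t' h hne
    cases t' with
    | nil => simp at h
    | cons b r' =>
      by_cases hab : a = b
      · subst hab
        have hne' : r ≠ r' := by
          intro e; exact hne (by rw [e])
        obtain ⟨p, a', b', q, q', h1, h2, h3, h4⟩ := ih r' (by simpa using h) hne'
        exact ⟨a :: p, a', b', q, q', by simp [h1], by simp [h2], h3, h4⟩
      · exact ⟨[], a, b, r, r', rfl, rfl, hab, by simpa using h⟩

/-- If a binary word is unbalanced, it contains factors `1t1` and `0t0` for some `t`. -/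
lemma bal_exists_pair {x : List Bool} (h : ¬ BalancedFin x) :
    ∃ t : List Bool, (true :: (t ++ [true])) <:+: x ∧ (false :: (t ++ [false])) <:+: x := by
  classical
  have hex : ∃ n, ∃ u v : List Bool, u <:+: x ∧ v <:+: x ∧ u.length = n ∧ v.length = n ∧
      (v.count true : ℤ) + 2 ≤ (u.count true : ℤ) := by
    simp only [BalancedFin] at h
    push_neg at h
    obtain ⟨u, v, hu, hv, hl, a, ha⟩ := h
    have hcu := bal_count_tf u
    have hcv := bal_count_tf v
    have key : (v.count true : ℤ) + 2 ≤ u.count true ∨ (u.count true : ℤ) + 2 ≤ v.count true := by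
      cases a with
      | false => rcases lt_abs.mp ha with h' | h' <;> omega
      | true => rcases lt_abs.mp ha with h' | h' <;> omega
    rcases key with k | k
    · exact ⟨u.length, u, v, hu, hv, rfl, hl.symm, k⟩
    · exact ⟨v.length, v, u, hv, hu, rfl, hl, k⟩
  set N := Nat.find hex with hNdef
  obtain ⟨u, v, hu, hv, hlu, hlv, hcnt⟩ := Nat.find_spec hex
  have hmin : ∀ u' v' : List Bool, u' <:+: x → v' <:+: x → u'.length = v'.length →
      u'.length < N → (u'.count true : ℤ) < v'.count true + 2 := by
    intro u' v' h1 h2 h3 h4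
    by_contra hc
    push_neg at hc
    exact Nat.find_min hex h4 ⟨u', v', h1, h2, rfl, h3.symm, hc⟩
  rcases u with _ | ⟨a, u'⟩
  · simp at hcnt; omega
  rcases v with _ | ⟨b, v'⟩
  · simp at hlu hlv; omega
  simp only [List.length_cons] at hlu hlv
  have hu' : u' <:+: x := ((List.suffix_cons a u').isInfix).trans hu
  have hv' : v' <:+: x := ((List.suffix_cons b v').isInfix).trans hv
  have hab : a = true ∧ b = false := by
    by_contra hc
    have hlt := hmin u' v' hu' hv' (by omega) (by omega)
    cases a <;> cases b
    · simp [List.count_cons] at hcnt; omega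
    · simp [List.count_cons] at hcnt; omega
    · exact hc ⟨rfl, rfl⟩
    · simp [List.count_cons] at hcnt; omega
  obtain ⟨rfl, rfl⟩ := hab
  rcases List.eq_nil_or_concat u' with rfl | ⟨t, c, huc⟩
  · simp only [List.length_nil] at hlu
    have hv0 : v' = [] := List.eq_nil_of_length_eq_zero (by omega)
    subst hv0
    simp at hcnt
  rw [List.concat_eq_append] at huc; subst huc
  rcases List.eq_nil_or_concat v' with rfl | ⟨t', d, hvc⟩
  · simp at hlu hlv; omega
  rw [List.concat_eq_append] at hvc; subst hvc
  simp only [List.length_append, List.length_cons, List.length_nil] at hlu hlv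
  have hTt : (true :: t) <:+: x := List.IsInfix.trans ⟨[], [c], by simp⟩ hu
  have hFt' : (false :: t') <:+: x := List.IsInfix.trans ⟨[], [d], by simp⟩ hv
  have hcd : c = true ∧ d = false := by
    by_contra hc
    have hlt := hmin (true :: t) (false :: t') hTt hFt' (by simp; omega) (by simp; omega)
    cases c <;> cases d
    · simp [List.count_cons, List.count_append] at hcnt hlt; omega
    · simp [List.count_cons, List.count_append] at hcnt hlt; omega
    · exact hc ⟨rfl, rfl⟩
    · simp [List.count_cons, List.count_append] at hcnt hlt; omega
  obtain ⟨rfl, rfl⟩ := hcd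
  have hcteq : (t.count true : ℤ) = t'.count true := by
    have hlt := hmin (true :: t) (false :: t') hTt hFt' (by simp; omega) (by simp; omega)
    simp [List.count_cons, List.count_append] at hcnt hlt; omega
  have hteq : t = t' := by
    by_contra hne
    obtain ⟨p, a', b', q, q', rfl, rfl, hne', hq⟩ := bal_firstDiff t t' (by omega) hne
    simp only [List.length_append, List.length_cons] at hlu hlv
    simp only [List.count_append, List.count_cons] at hcteq
    cases a' <;> cases b'
    · exact hne' rfl
    · -- a' = false, b' = true : compare suffixes q ++ [true] and q' ++ [false]
      have h1 : (q ++ [true]) <:+: x :=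
        List.IsInfix.trans ⟨true :: p ++ [false], [], by simp⟩ hu
      have h2 : (q' ++ [false]) <:+: x :=
        List.IsInfix.trans ⟨false :: p ++ [true], [], by simp⟩ hv
      have hlt := hmin (q ++ [true]) (q' ++ [false]) h1 h2 (by simp [hq]) (by simp; omega)
      simp [List.count_append, List.count_cons] at hlt hcteq
      omega
    · -- a' = true, b' = false : compare prefixes true :: p ++ [true] and false :: p ++ [false]
      have h1 : (true :: (p ++ [true])) <:+: x :=
        List.IsInfix.trans ⟨[], q ++ [true], by simp⟩ hu
      have h2 : (false :: (p ++ [false])) <:+: x :=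
        List.IsInfix.trans ⟨[], q' ++ [false], by simp⟩ hv
      have hlt := hmin (true :: (p ++ [true])) (false :: (p ++ [false])) h1 h2 (by simp)
        (by simp; omega)
      simp [List.count_append, List.count_cons] at hlt
      omega
    · exact hne' rfl
  subst hteq
  exact ⟨t, hu, hv⟩

lemma bal_no_both {w t : List Bool} (hw : BalancedFin w)
    (h1 : (true :: (t ++ [true])) <:+: w) (h0 : (false :: (t ++ [false])) <:+: w) : False := by
  have h := hw _ _ h1 h0 (by simp) true
  rw [abs_le] at h
  obtain ⟨hl, hr⟩ := h
  simp [List.count_cons, List.count_append] at hl hr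
  omega

lemma bal_infix_concat {u w : List Bool} {c : Bool} (h : u <:+: w ++ [c]) :
    u <:+: w ∨ ∃ s, s ++ u = w ++ [c] := by
  obtain ⟨s, e, he⟩ := h
  rcases List.eq_nil_or_concat e with rfl | ⟨e', d, rfl⟩
  · right; exact ⟨s, by simpa using he⟩
  · left
    rw [List.concat_eq_append] at he
    have he' : (s ++ u ++ e') ++ [d] = w ++ [c] := by
      simpa [List.append_assoc] using he
    exact ⟨s, e', (List.append_inj' he' rfl).1⟩

lemma bal_suffix_of_cons {u l : List Bool} {a : Bool} (h : u <:+ a :: l)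
    (hlen : u.length ≤ l.length) : u <:+ l := by
  obtain ⟨s, hs⟩ := h
  cases s with
  | nil =>
    simp at hs; subst hs
    simp at hlen
  | cons b s' =>
    refine ⟨s', ?_⟩
    rw [List.cons_append] at hs
    exact (List.cons.injEq _ _ _ _ ▸ hs).2

/-- Key step: from `1t1 <:+: w++[false]` and `0t0 <:+: w++[false]` with `w` balanced,
we get `1t1 <:+: w` and `0t <:+ w`. -/
lemma bal_extract {w t : List Bool} (hw : BalancedFin w)
    (h1 : (true :: (t ++ [true])) <:+: w ++ [false])
    (h0 : (false :: (t ++ [false])) <:+: w ++ [false]) :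
    (true :: (t ++ [true])) <:+: w ∧ (false :: t) <:+ w := by
  have h1w : (true :: (t ++ [true])) <:+: w := by
    rcases bal_infix_concat h1 with h | ⟨s, hs⟩
    · exact h
    · exfalso
      have hs' : (s ++ (true :: t)) ++ [true] = w ++ [false] := by
        simpa [List.append_assoc] using hs
      have := (List.append_inj' hs' rfl).2
      simp at this
  have h0s : (false :: t) <:+ w := by
    rcases bal_infix_concat h0 with h | ⟨s, hs⟩
    · exact absurd h (fun h => bal_no_both hw h1w h)
    · have hs' : (s ++ (false :: t)) ++ [false] = w ++ [false] := by
        simpa [List.append_assoc] using hs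
      exact ⟨s, (List.append_inj' hs' rfl).1⟩
  exact ⟨h1w, h0s⟩

/-- Symmetric version for appending `true`. -/
lemma bal_extract' {w s : List Bool} (hw : BalancedFin w)
    (h1 : (true :: (s ++ [true])) <:+: w ++ [true])
    (h0 : (false :: (s ++ [false])) <:+: w ++ [true]) :
    (false :: (s ++ [false])) <:+: w ∧ (true :: s) <:+ w := by
  have h0w : (false :: (s ++ [false])) <:+: w := by
    rcases bal_infix_concat h0 with h | ⟨r, hr⟩
    · exact h
    · exfalso
      have hr' : (r ++ (false :: s)) ++ [false] = w ++ [true] := by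
        simpa [List.append_assoc] using hr
      have := (List.append_inj' hr' rfl).2
      simp at this
  have h1s : (true :: s) <:+ w := by
    rcases bal_infix_concat h1 with h | ⟨r, hr⟩
    · exact absurd h (fun h => bal_no_both hw h h0w)
    · have hr' : (r ++ (true :: s)) ++ [true] = w ++ [true] := by
        simpa [List.append_assoc] using hr
      exact ⟨r, (List.append_inj' hr' rfl).1⟩
  exact ⟨h0w, h1s⟩

lemma bal_right_ext (w : List Bool) (hw : BalancedFin w) :
    ∃ x : Bool, BalancedFin (w ++ [x]) := by
  by_contra hc
  push_neg at hc
  obtain ⟨t, ht1, ht0⟩ := bal_exists_pair (hc false)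
  obtain ⟨s, hs1, hs0⟩ := bal_exists_pair (hc true)
  obtain ⟨ht1w, htsuf⟩ := bal_extract hw ht1 ht0
  obtain ⟨hs0w, hssuf⟩ := bal_extract' hw hs1 hs0
  rcases List.suffix_or_suffix_of_suffix htsuf hssuf with h | h
  · -- false :: t <:+ true :: s
    rcases Nat.lt_or_ge (false :: t).length (true :: s).length with hlt | hge
    · have h' : (false :: t) <:+ s := bal_suffix_of_cons h (by simp at hlt ⊢; omega)
      obtain ⟨r, hr⟩ := h'
      have h0t0 : (false :: (t ++ [false])) <:+: w :=
        List.IsInfix.trans ⟨false :: r, [], by simp [← hr]⟩ hs0w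
      exact bal_no_both hw ht1w h0t0
    · have heq := h.eq_of_length (le_antisymm h.length_le hge)
      simp at heq
  · -- true :: s <:+ false :: t
    rcases Nat.lt_or_ge (true :: s).length (false :: t).length with hlt | hge
    · have h' : (true :: s) <:+ t := bal_suffix_of_cons h (by simp at hlt ⊢; omega)
      obtain ⟨r, hr⟩ := h'
      have h1s1 : (true :: (s ++ [true])) <:+: w :=
        List.IsInfix.trans ⟨true :: r, [], by simp [← hr]⟩ ht1w
      exact bal_no_both hw h1s1 hs0w
    · have heq := h.eq_of_length (le_antisymm h.length_le hge)
      simp at heq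

lemma bal_reverse {w : List Bool} (hw : BalancedFin w) : BalancedFin w.reverse := by
  intro u v hu hv hl a
  have hu' : u.reverse <:+: w := by
    have := List.reverse_infix.mpr hu
    simpa using this
  have hv' : v.reverse <:+: w := by
    have := List.reverse_infix.mpr hv
    simpa using this
  have := hw u.reverse v.reverse hu' hv' (by simpa using hl) a
  simpa [List.count_reverse] using this

/-- Every finite balanced word over the two-letter alphabet `Bool` can be extended
by a letter on the right and by a letter on the left so as to stay balanced. -/
theorem stmt14 (w : List Bool) (hw : BalancedFin w) :
    ∃ x y : Bool, BalancedFin (w ++ [x]) ∧ BalancedFin (y :: w) := by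
  obtain ⟨x, hx⟩ := bal_right_ext w hw
  obtain ⟨y, hy⟩ := bal_right_ext w.reverse (bal_reverse hw)
  refine ⟨x, y, hx, ?_⟩
  have := bal_reverse hy
  simpa using this
end
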